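/- arXiv:1209.4287 — 13 statements merged into one kernel-verified Lean document; each statement's English description precedes it below -/
import Mathlib

section
/- Let S = {x_1, ..., x_n} be a finite meet-closed subset of a lattice P, ordered so that x_i ≼ x_j implies i ≤ j, and let f : P → ℝ. Define Ψ on S by Ψ(x_k) = Σ_{x_v ≼ x_k} f(x_v) μ_S(x_v, x_k), where μ_S is the Möbius function of the poset (S, ≼). Then det((f(x_i ∧ x_j))_{i,j=1}^n) = Ψ(x_1) Ψ(x_2) ⋯ Ψ(x_n). -/
open scoped Classical

/-- **Determinant of a meet matrix on a meet-closed set.**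
`x : Fin n → P` enumerates the meet-closed set `S` compatibly with the order,
and `Ψ` is the function determined by `f (x k) = ∑_{x v ≼ x k} Ψ v`
(equivalently `Ψ (x k) = ∑_{x v ≼ x k} f (x v) μ_S (x v, x k)`). Then
`det (f (x i ⊓ x j)) = ∏ i, Ψ i`. -/
theorem meet_matrix_det {P : Type*} [Lattice P] {n : ℕ} (x : Fin n → P)
    (hinj : Function.Injective x)
    (hord : ∀ i j, x i ≤ x j → i ≤ j)
    (hmeet : ∀ i j, ∃ k, x k = x i ⊓ x j)
    (f : P → ℝ) (Ψ : Fin n → ℝ)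
    (hΨ : ∀ k, f (x k) = ∑ v ∈ Finset.univ.filter fun v => x v ≤ x k, Ψ v) :
    (Matrix.of fun i j => f (x i ⊓ x j)).det = ∏ i, Ψ i := by
  set A : Matrix (Fin n) (Fin n) ℝ :=
    Matrix.of fun i v => if x v ≤ x i then (1 : ℝ) else 0 with hA
  have hfact : (Matrix.of fun i j => f (x i ⊓ x j))
      = A * Matrix.diagonal Ψ * A.transpose := by
    ext i j
    obtain ⟨k, hk⟩ := hmeet i j
    have : f (x i ⊓ x j) = ∑ v ∈ Finset.univ.filter fun v => x v ≤ x i ⊓ x j, Ψ v := by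
      rw [← hk, hΨ k, hk]
    simp only [Matrix.of_apply, Matrix.mul_apply, Matrix.diagonal, Matrix.transpose_apply,
      Matrix.of_apply, this, Finset.sum_filter]
    refine Finset.sum_congr rfl fun v _ => ?_
    rw [Finset.sum_eq_single v (fun b _ hb => by simp [hb]) (by simp)]
    by_cases h1 : x v ≤ x i <;> by_cases h2 : x v ≤ x j <;>
      simp [hA, h1, h2, le_inf_iff]
  have hdetA : A.det = 1 := by
    have htri : A.transpose.BlockTriangular id := by
      intro i j hij
      simp only [Matrix.transpose_apply, hA, Matrix.of_apply, ite_eq_right_iff]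
      intro h
      exact absurd (hord _ _ h) (not_le.mpr hij)
    rw [← Matrix.det_transpose, Matrix.det_of_upperTriangular htri]
    refine Finset.prod_eq_one fun i _ => ?_
    simp [hA]
  rw [hfact, Matrix.det_mul, Matrix.det_mul, Matrix.det_transpose, hdetA,
    Matrix.det_diagonal, one_mul, mul_one]
end

section
/- Let S = {x_1, ..., x_n} be a finite join-closed subset of a lattice P, ordered so that x_i ≼ x_j implies i ≤ j, and let f : P → ℝ. Define Φ on S by Φ(x_k) = Σ_{x_k ≼ x_v} f(x_v) μ_S(x_k, x_v). Then det((f(x_i ∨ x_j))_{i,j=1}^n) = Φ(x_1) Φ(x_2) ⋯ Φ(x_n). -/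
open scoped Classical

/-- **Determinant of a join matrix on a join-closed set.** -/
theorem join_matrix_det {P : Type*} [Lattice P] {n : ℕ} (x : Fin n → P)
    (hinj : Function.Injective x)
    (hord : ∀ i j, x i ≤ x j → i ≤ j)
    (hjoin : ∀ i j, ∃ k, x k = x i ⊔ x j)
    (f : P → ℝ) (Φ : Fin n → ℝ)
    (hΦ : ∀ k, f (x k) = ∑ v ∈ Finset.univ.filter fun v => x k ≤ x v, Φ v) :
    (Matrix.of fun i j => f (x i ⊔ x j)).det = ∏ i, Φ i := by
  set A : Matrix (Fin n) (Fin n) ℝ := fun i v => if x i ≤ x v then 1 else 0 with hA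
  have hfact : (Matrix.of fun i j => f (x i ⊔ x j)) = A * Matrix.diagonal Φ * A.transpose := by
    ext i j
    obtain ⟨k, hk⟩ := hjoin i j
    rw [Matrix.mul_apply]
    simp only [Matrix.mul_diagonal, Matrix.transpose_apply, Matrix.of_apply, ← hk, hΦ k]
    rw [Finset.sum_filter]
    apply Finset.sum_congr rfl
    intro v _
    have : x k ≤ x v ↔ x i ≤ x v ∧ x j ≤ x v := by rw [hk]; exact sup_le_iff
    by_cases h : x k ≤ x v
    · obtain ⟨h1, h2⟩ := this.mp h
      simp [hA, h, h1, h2]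
    · have : ¬(x i ≤ x v) ∨ ¬(x j ≤ x v) := by
        by_contra hc
        push_neg at hc
        exact h (this.mpr ⟨hc.1, hc.2⟩)
      rcases this with h1 | h1 <;> simp [hA, h, h1]
  have htri : A.BlockTriangular id := by
    intro i j hij
    simp only [hA]
    rw [if_neg]
    intro h
    exact absurd (hord _ _ h) (not_le.mpr hij)
  have hdetA : A.det = 1 := by
    rw [Matrix.det_of_upperTriangular htri]
    simp [hA]
  rw [hfact, Matrix.det_mul, Matrix.det_mul, Matrix.det_transpose, hdetA,
    Matrix.det_diagonal]
  ring
end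

section
/- Let S = {x_1,...,x_n} be a finite meet-closed subset of a lattice, indexed so that x_i ≼ x_j implies i ≤ j, and f a real-valued function. Then the meet matrix (f(x_i ∧ x_j))_{i,j} is positive definite if and only if Ψ(x_i) > 0 for all i = 1,...,n, where Ψ(x_k) = Σ_{x_v ≼ x_k} f(x_v) μ_S(x_v, x_k). -/
open scoped Classical
open Matrix

private lemma mul_diag_mul_posDef {n : ℕ} (E D : Matrix (Fin n) (Fin n) ℝ)
    (hE : IsUnit E.det) (hD : D.PosDef) : (E * D * Eᵀ).PosDef := by
  have key : ∀ w : Fin n → ℝ,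
      star w ⬝ᵥ (E * D * Eᵀ) *ᵥ w = star (Eᵀ *ᵥ w) ⬝ᵥ D *ᵥ (Eᵀ *ᵥ w) := by
    intro w
    simp only [star_trivial, ← Matrix.mulVec_mulVec, Matrix.dotProduct_mulVec,
      Matrix.vecMul_vecMul, Matrix.mulVec_transpose]
  rw [Matrix.posDef_iff_dotProduct_mulVec]
  constructor
  · have hH : Dᵀ = D := by
      have := hD.isHermitian.eq
      rwa [Matrix.conjTranspose_eq_transpose_of_trivial] at this
    show (E * D * Eᵀ)ᴴ = E * D * Eᵀ
    rw [Matrix.conjTranspose_eq_transpose_of_trivial, Matrix.transpose_mul,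
      Matrix.transpose_mul, Matrix.transpose_transpose, hH, ← mul_assoc]
  · intro v hv
    have hv' : Eᵀ *ᵥ v ≠ 0 := by
      have hinj : Function.Injective (Eᵀ.mulVec) := by
        rw [Matrix.mulVec_injective_iff_isUnit, Matrix.isUnit_iff_isUnit_det,
          Matrix.det_transpose]
        exact hE
      intro h
      exact hv (hinj (by simpa using h))
    rw [key]
    exact hD.dotProduct_mulVec_pos hv'

/-- **Positive definiteness of a meet matrix on a meet-closed set**:
`(f (x i ⊓ x j))` is positive definite iff `Ψ (x i) > 0` for all `i`, where
`Ψ` is determined by `f (x k) = ∑_{x v ≼ x k} Ψ v`. -/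
theorem meet_matrix_posDef_iff {P : Type*} [Lattice P] {n : ℕ} (x : Fin n → P)
    (hinj : Function.Injective x)
    (hord : ∀ i j, x i ≤ x j → i ≤ j)
    (hmeet : ∀ i j, ∃ k, x k = x i ⊓ x j)
    (f : P → ℝ) (Ψ : Fin n → ℝ)
    (hΨ : ∀ k, f (x k) = ∑ v ∈ Finset.univ.filter fun v => x v ≤ x k, Ψ v) :
    (Matrix.of fun i j => f (x i ⊓ x j)).PosDef ↔ ∀ i, 0 < Ψ i := by
  set E : Matrix (Fin n) (Fin n) ℝ := Matrix.of fun i k => if x k ≤ x i then 1 else 0 with hE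
  set D : Matrix (Fin n) (Fin n) ℝ := Matrix.diagonal Ψ with hD
  have hA : (Matrix.of fun i j => f (x i ⊓ x j)) = E * D * Eᵀ := by
    ext i j
    obtain ⟨k, hk⟩ := hmeet i j
    have hk' : ∀ v, x v ≤ x k ↔ x v ≤ x i ∧ x v ≤ x j := fun v => by
      rw [hk]; exact le_inf_iff
    rw [Matrix.of_apply, ← hk, hΨ k, Finset.sum_filter, Matrix.mul_apply]
    refine Finset.sum_congr rfl fun v _ => ?_
    rw [hD, Matrix.mul_diagonal, Matrix.transpose_apply, hE]
    simp only [Matrix.of_apply]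
    by_cases h1 : x v ≤ x i <;> by_cases h2 : x v ≤ x j <;>
      simp [h1, h2, hk' v]
  have hdet : E.det = 1 := by
    have htri : Eᵀ.BlockTriangular id := by
      intro i j hij
      simp only [Matrix.transpose_apply, hE, Matrix.of_apply, ite_eq_right_iff]
      intro hle
      exact absurd (hord _ _ hle) (not_le.mpr hij)
    rw [← Matrix.det_transpose, Matrix.det_of_upperTriangular htri]
    simp [hE]
  have hEu : IsUnit E.det := by rw [hdet]; exact isUnit_one
  constructor
  · intro hpd
    rw [hA] at hpd
    have hDrec : D = E⁻¹ * (E * D * Eᵀ) * (E⁻¹)ᵀ := by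
      rw [Matrix.transpose_nonsing_inv]
      have h1 : E⁻¹ * E = 1 := Matrix.nonsing_inv_mul E hEu
      have h2 : Eᵀ * (Eᵀ)⁻¹ = 1 := Matrix.mul_nonsing_inv Eᵀ (by rwa [Matrix.det_transpose])
      calc D = (E⁻¹ * E) * D * (Eᵀ * (Eᵀ)⁻¹) := by rw [h1, h2]; simp
        _ = E⁻¹ * (E * D * Eᵀ) * (Eᵀ)⁻¹ := by noncomm_ring
    have hEu' : IsUnit (E⁻¹).det := by
      rw [Matrix.det_nonsing_inv, hdet]; simp
    have hpd' : D.PosDef := hDrec ▸ mul_diag_mul_posDef _ _ hEu' hpd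
    intro i
    exact Matrix.posDef_diagonal_iff.mp hpd' i
  · intro hpos
    rw [hA]
    exact mul_diag_mul_posDef _ _ hEu (Matrix.PosDef.diagonal hpos)
end

section
/- Let S = {x_1,...,x_n} be a finite join-closed subset of a lattice, indexed so that x_i ≼ x_j implies i ≤ j, and f a real-valued function. Then the join matrix (f(x_i ∨ x_j))_{i,j} is positive definite if and only if Φ(x_i) > 0 for all i = 1,...,n, where Φ(x_k) = Σ_{x_k ≼ x_v} f(x_v) μ_S(x_k, x_v). -/
open scoped Classical
open Matrix

/-- **Positive definiteness of a join matrix on a join-closed set**: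
`(f (x i ⊔ x j))` is positive definite iff `Φ (x i) > 0` for all `i`. -/
theorem join_matrix_posDef_iff {P : Type*} [Lattice P] {n : ℕ} (x : Fin n → P)
    (hinj : Function.Injective x)
    (hord : ∀ i j, x i ≤ x j → i ≤ j)
    (hjoin : ∀ i j, ∃ k, x k = x i ⊔ x j)
    (f : P → ℝ) (Φ : Fin n → ℝ)
    (hΦ : ∀ k, f (x k) = ∑ v ∈ Finset.univ.filter fun v => x k ≤ x v, Φ v) :
    (Matrix.of fun i j => f (x i ⊔ x j)).PosDef ↔ ∀ i, 0 < Φ i := by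
  set E : Matrix (Fin n) (Fin n) ℝ := Matrix.of fun i v => if x i ≤ x v then (1 : ℝ) else 0
    with hE
  -- E is upper triangular with unit diagonal
  have hEtri : E.BlockTriangular id := by
    intro i j hij
    simp only [hE, Matrix.of_apply, ite_eq_right_iff]
    intro h
    exact absurd (hord _ _ h) (not_le.mpr hij)
  have hEdet : E.det = 1 := by
    rw [Matrix.det_of_upperTriangular hEtri]
    simp [hE]
  have hEunit : IsUnit E := by
    rw [Matrix.isUnit_iff_isUnit_det, hEdet]; exact isUnit_one
  -- the factorization
  have hfact : Matrix.of (fun i j => f (x i ⊔ x j))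
      = E * Matrix.diagonal Φ * Eᵀ := by
    ext i j
    obtain ⟨k, hk⟩ := hjoin i j
    have : f (x i ⊔ x j) = f (x k) := by rw [hk]
    rw [Matrix.of_apply, this, hΦ k]
    simp only [Matrix.mul_apply, Matrix.diagonal_apply, Matrix.transpose_apply, hE,
      Matrix.of_apply, Finset.sum_ite_eq, Finset.mem_univ, if_true]
    rw [Finset.sum_filter]
    refine Finset.sum_congr rfl fun v _ => ?_
    have : x k ≤ x v ↔ x i ≤ x v ∧ x j ≤ x v := by rw [hk, sup_le_iff]
    by_cases h1 : x i ≤ x v <;> by_cases h2 : x j ≤ x v <;>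
      simp [this, h1, h2]
  rw [hfact, ← Matrix.posDef_diagonal_iff (d := Φ)]
  -- transfer PosDef through the invertible congruence
  have hbij : Function.Bijective (fun y : Fin n → ℝ => Eᵀ *ᵥ y) := by
    have hu : IsUnit Eᵀ := by
      rw [Matrix.isUnit_iff_isUnit_det, Matrix.det_transpose, hEdet]; exact isUnit_one
    refine ⟨Matrix.mulVec_injective_iff_isUnit.mpr hu, fun y => ⟨(Eᵀ)⁻¹ *ᵥ y, ?_⟩⟩
    show Eᵀ *ᵥ ((Eᵀ)⁻¹ *ᵥ y) = y
    rw [Matrix.mulVec_mulVec, Matrix.mul_nonsing_inv _ (by simpa using hu.map (Matrix.detMonoidHom)),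
      Matrix.one_mulVec]
  have key : ∀ (v : Fin n → ℝ), v ⬝ᵥ (E * Matrix.diagonal Φ * Eᵀ) *ᵥ v
      = (Eᵀ *ᵥ v) ⬝ᵥ Matrix.diagonal Φ *ᵥ (Eᵀ *ᵥ v) := by
    intro v
    rw [← Matrix.mulVec_mulVec, ← Matrix.mulVec_mulVec, Matrix.dotProduct_mulVec (A := E),
      ← Matrix.mulVec_transpose, Matrix.dotProduct_mulVec, Matrix.dotProduct_mulVec]
  rw [Matrix.posDef_iff_dotProduct_mulVec, Matrix.posDef_iff_dotProduct_mulVec]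
  constructor
  · rintro ⟨hherm, hpos⟩
    refine ⟨Matrix.isHermitian_diagonal _, fun y hy => ?_⟩
    obtain ⟨v, rfl⟩ := hbij.surjective y
    have hv : v ≠ 0 := by
      rintro rfl; exact hy (by simp)
    have := hpos hv
    simpa [key v] using this
  · rintro ⟨hherm, hpos⟩
    constructor
    · rw [← hfact]
      show _ = _
      ext i j
      simp only [Matrix.conjTranspose_apply, Matrix.of_apply, star_trivial]
      rw [sup_comm]
    · intro v hv
      have hy : Eᵀ *ᵥ v ≠ 0 := fun h => hv (hbij.injective (by simpa using h))
      have := hpos hy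
      simpa [key v] using this
end

section
/- Let x_1 ≺ x_2 ≺ ⋯ ≺ x_n be a chain in a lattice P and f : P → ℝ. The n×n matrix with (i,j) entry f(x_{min(i,j)}) is positive definite if and only if 0 < f(x_1) < f(x_2) < ⋯ < f(x_n). -/
open scoped Matrix


/-- **MIN matrix of a chain**: for a chain `x 0 ≺ x 1 ≺ ⋯` in a lattice `P`,
the matrix `(f (x (min i j)))` is positive definite iff
`0 < f (x 0) < f (x 1) < ⋯ < f (x (n-1))`. -/
theorem min_matrix_posDef_iff {P : Type*} [Lattice P] {n : ℕ} (x : Fin n → P)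
    (hchain : StrictMono x) (f : P → ℝ) :
    (Matrix.of fun i j => f (x (min i j))).PosDef ↔
      (∀ i, 0 < f (x i)) ∧ StrictMono fun i => f (x i) := by
  set g : Fin n → ℝ := fun i => f (x i) with hg
  constructor
  · intro h
    constructor
    · intro i
      have hv : (Pi.single i 1 : Fin n → ℝ) ≠ 0 := by
        intro hc
        have := congrFun hc i
        simp at this
      have h2 := h.dotProduct_mulVec_pos hv
      simp only [star_trivial, dotProduct, Matrix.mulVec, Matrix.of_apply,
        Pi.single_apply, mul_ite, mul_one, mul_zero, ite_mul, zero_mul,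
        Finset.sum_ite_eq', Finset.mem_univ, if_true, min_self] at h2
      linarith
    · intro i j hij
      have hv : (Pi.single j 1 - Pi.single i 1 : Fin n → ℝ) ≠ 0 := by
        intro hc
        have := congrFun hc j
        simp [Pi.single_apply, hij.ne'] at this
      have h2 := h.dotProduct_mulVec_pos hv
      have hmv : (Matrix.of fun i j => g (min i j)) *ᵥ ((Pi.single j 1 : Fin n → ℝ) - Pi.single i 1) = fun k => g (min k j) - g (min k i) := by
        ext k
        simp [Matrix.mulVec, dotProduct, Pi.single_apply, mul_ite, mul_sub,
          Finset.sum_sub_distrib, Finset.sum_ite_eq', Pi.sub_apply]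
      rw [star_trivial, hmv] at h2
      simp only [dotProduct, Pi.sub_apply, Pi.single_apply] at h2
      have : (0:ℝ) < g j - g i := by
        have := h2
        simp only [sub_mul, ite_mul, one_mul, zero_mul, Finset.sum_sub_distrib,
          Finset.sum_ite_eq', Finset.mem_univ, if_true] at this
        rw [min_self, min_eq_right hij.le, min_eq_left hij.le, min_self] at this
        linarith
      linarith
  · rintro ⟨hpos, hmono⟩
    have hgmono : StrictMono g := hmono
    -- extension of g to ℕ (shifted by one), h 0 = 0, h (k+1) = g k
    set hE : ℕ → ℝ := fun k => if hk : k - 1 < n ∧ 0 < k then g ⟨k - 1, hk.1⟩ else 0 with hhE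
    set d : ℕ → ℝ := fun k => hE (k + 1) - hE k with hd
    have hE_succ : ∀ k (hk : k < n), hE (k + 1) = g ⟨k, hk⟩ := by
      intro k hk
      simp only [hhE, Nat.add_sub_cancel, hk, Nat.succ_pos, and_true, dif_pos]
    have hd_pos : ∀ k, k < n → 0 < d k := by
      intro k hk
      rcases Nat.eq_zero_or_pos k with h0 | h0
      · subst h0
        have : hE 0 = 0 := by simp [hhE]
        rw [hd]
        simp only [this, hE_succ 0 hk, sub_zero]
        exact hpos _
      · have hk1 : k - 1 < n := lt_of_le_of_lt (Nat.sub_le _ _) hk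
        have hEk : hE k = g ⟨k - 1, hk1⟩ := by simp [hhE, hk1, h0]
        rw [hd]
        simp only [hEk, hE_succ k hk, sub_pos]
        exact hgmono (by simp [Fin.lt_def]; omega)
    have htel : ∀ m : Fin n, ∑ k ∈ Finset.range ((m : ℕ) + 1), d k = g m := by
      intro m
      rw [hd, Finset.sum_range_sub hE]
      have : hE 0 = 0 := by simp [hhE]
      rw [this, sub_zero, hE_succ m m.isLt]
    have hind : ∀ m : Fin n, g m = ∑ k ∈ Finset.range n,
        if k ≤ (m : ℕ) then d k else 0 := by
      intro m
      have e1 : ∑ k ∈ Finset.range ((m : ℕ) + 1), (if k ≤ (m : ℕ) then d k else 0)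
          = ∑ k ∈ Finset.range n, (if k ≤ (m : ℕ) then d k else 0) :=
        Finset.sum_subset (Finset.range_subset_range.2 m.isLt)
          (fun k _ hk => by
            simp only [Finset.mem_range, Nat.lt_succ_iff, not_lt] at hk
            simp [if_neg (by omega : ¬ k ≤ (m : ℕ))])
      have e2 : ∑ k ∈ Finset.range ((m : ℕ) + 1), (if k ≤ (m : ℕ) then d k else 0)
          = ∑ k ∈ Finset.range ((m : ℕ) + 1), d k :=
        Finset.sum_congr rfl fun k hk => by
          simp only [Finset.mem_range, Nat.lt_succ_iff] at hk
          simp [hk]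
      rw [← htel m, ← e2, e1]
    refine Matrix.PosDef.of_dotProduct_mulVec_pos ?_ ?_
    · ext i j
      simp [Matrix.conjTranspose_apply, min_comm]
    · intro v hv
      rw [star_trivial]
      have key : v ⬝ᵥ (Matrix.of fun i j => g (min i j)) *ᵥ v
          = ∑ k ∈ Finset.range n, d k *
            (∑ i : Fin n, if k ≤ (i : ℕ) then v i else 0) ^ 2 := by
        simp only [dotProduct, Matrix.mulVec, Matrix.of_apply]
        have step1 : ∀ i j : Fin n, v i * (g (min i j) * v j)
            = ∑ k ∈ Finset.range n,
              (if k ≤ (i : ℕ) then v i else 0) * (d k * (if k ≤ (j : ℕ) then v j else 0)) := by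
          intro i j
          rw [hind (min i j), Finset.sum_mul, Finset.mul_sum]
          apply Finset.sum_congr rfl
          intro k _
          have hmin : (((min i j : Fin n)) : ℕ) = min (i : ℕ) (j : ℕ) := rfl
          by_cases hi : k ≤ (i : ℕ) <;> by_cases hj : k ≤ (j : ℕ) <;>
            simp [hmin, hi, hj, le_min_iff] <;> ring
        calc ∑ i : Fin n, v i * ∑ j : Fin n, g (min i j) * v j
            = ∑ i : Fin n, ∑ j : Fin n, v i * (g (min i j) * v j) := by
              simp [Finset.mul_sum]
          _ = ∑ i : Fin n, ∑ j : Fin n, ∑ k ∈ Finset.range n,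
              (if k ≤ (i : ℕ) then v i else 0) * (d k * (if k ≤ (j : ℕ) then v j else 0)) := by
              simp only [step1]
          _ = ∑ i : Fin n, ∑ k ∈ Finset.range n, ∑ j : Fin n,
              (if k ≤ (i : ℕ) then v i else 0) * (d k * (if k ≤ (j : ℕ) then v j else 0)) :=
              Finset.sum_congr rfl fun i _ => Finset.sum_comm
          _ = ∑ k ∈ Finset.range n, ∑ i : Fin n, ∑ j : Fin n,
              (if k ≤ (i : ℕ) then v i else 0) * (d k * (if k ≤ (j : ℕ) then v j else 0)) :=
              Finset.sum_comm
          _ = ∑ k ∈ Finset.range n, d k *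
              (∑ i : Fin n, if k ≤ (i : ℕ) then v i else 0) ^ 2 := by
              apply Finset.sum_congr rfl
              intro k _
              simp only [← Finset.mul_sum, ← Finset.sum_mul]
              ring
      rw [key]
      -- find maximal index with v ≠ 0
      have hne : (Finset.univ.filter fun i : Fin n => v i ≠ 0).Nonempty := by
        by_contra hc
        apply hv
        funext i
        simp only [Pi.zero_apply]
        by_contra hvi
        exact hc ⟨i, by simp [hvi]⟩
      set i0 := (Finset.univ.filter fun i : Fin n => v i ≠ 0).max' hne with hi0
      have hi0ne : v i0 ≠ 0 := by
        have := Finset.max'_mem _ hne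
        rw [← hi0] at this
        simpa using this
      have hgt : ∀ i : Fin n, i0 < i → v i = 0 := by
        intro i hi
        by_contra hvi
        exact absurd (Finset.le_max' _ i (by simp [hvi])) (not_le.2 hi)
      have hS : (∑ i : Fin n, if (i0 : ℕ) ≤ (i : ℕ) then v i else 0) = v i0 := by
        have hterm : ∀ i : Fin n,
            (if (i0 : ℕ) ≤ (i : ℕ) then v i else 0) = (if i = i0 then v i0 else 0) := by
          intro i
          rcases lt_trichotomy i i0 with hlt | heq | hgt'
          · rw [if_neg (fun hc => absurd (Fin.le_def.mpr hc) (not_le.2 hlt)),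
              if_neg hlt.ne]
          · simp [heq]
          · rw [if_pos (Fin.le_def.mp hgt'.le), if_neg hgt'.ne', hgt i hgt']
        rw [Finset.sum_congr rfl fun i _ => hterm i]
        simp
      apply Finset.sum_pos'
      · intro k hk
        exact mul_nonneg (hd_pos k (Finset.mem_range.1 hk)).le (sq_nonneg _)
      · refine ⟨(i0 : ℕ), Finset.mem_range.2 i0.isLt, ?_⟩
        rw [hS]
        exact mul_pos (hd_pos (i0 : ℕ) i0.isLt)
          (lt_of_le_of_ne (sq_nonneg _) (Ne.symm (pow_ne_zero 2 hi0ne)))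
end

section
/- Let x_1 ≺ x_2 ≺ ⋯ ≺ x_n be a chain in a lattice P and f : P → ℝ. The n×n matrix with (i,j) entry f(x_{max(i,j)}) is positive definite if and only if 0 < f(x_n) < f(x_{n-1}) < ⋯ < f(x_1). -/
open Finset Matrix

namespace MaxMatrixAux

variable {n : ℕ}

/-- Extension of `g : Fin (n+1) → ℝ` to `ℕ` by zero. -/
noncomputable def Gext (g : Fin (n+1) → ℝ) : ℕ → ℝ :=
  fun k => if h : k < n+1 then g ⟨k, h⟩ else 0

/-- Telescoping: `g m = ∑_{k=m}^{n} (G k - G (k+1))`. -/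
lemma tele (g : Fin (n+1) → ℝ) (m : Fin (n+1)) :
    g m = ∑ k ∈ Finset.Ico (m : ℕ) (n+1), (Gext g k - Gext g (k+1)) := by
  have key : ∀ b : ℕ, ∑ k ∈ Finset.range b, (Gext g k - Gext g (k+1))
      = Gext g 0 - Gext g b := fun b => Finset.sum_range_sub' (Gext g) b
  rw [Finset.sum_Ico_eq_sub _ (le_of_lt m.isLt), key, key]
  have h1 : Gext g (n+1) = 0 := by simp [Gext]
  have h2 : Gext g (m : ℕ) = g m := by simp [Gext, m.isLt]
  rw [h1, h2]; ring

/-- Expansion of `g (max i j)` as a sum of increments. -/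
lemma max_entry_eq (g : Fin (n+1) → ℝ) (i j : Fin (n+1)) :
    g (max i j) = ∑ k : Fin (n+1),
      (if i ≤ k ∧ j ≤ k then Gext g k - Gext g (k+1 : ℕ) else 0) := by
  have : ∀ k : Fin (n+1), (i ≤ k ∧ j ≤ k) ↔ ((max i j : Fin (n+1)) : ℕ) ≤ (k : ℕ) := by
    intro k; rw [← Fin.le_def]; exact (max_le_iff).symm
  calc g (max i j)
      = ∑ k ∈ Finset.Ico ((max i j : Fin (n+1)) : ℕ) (n+1),
          (Gext g k - Gext g (k+1)) := tele g _
    _ = ∑ k ∈ Finset.range (n+1),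
          (if ((max i j : Fin (n+1)) : ℕ) ≤ k then Gext g k - Gext g (k+1) else 0) := by
        rw [← Finset.sum_filter]
        refine Finset.sum_congr ?_ fun k _ => rfl
        ext k
        simp [Finset.mem_Ico, Finset.mem_filter, and_comm]
    _ = ∑ k : Fin (n+1),
          (if ((max i j : Fin (n+1)) : ℕ) ≤ (k : ℕ) then Gext g (k : ℕ) - Gext g ((k : ℕ)+1) else 0) := by
        rw [Fin.sum_univ_eq_sum_range
          (fun k => if ((max i j : Fin (n+1)) : ℕ) ≤ k then Gext g k - Gext g (k+1) else 0)]
    _ = _ := by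
        refine Finset.sum_congr rfl fun k _ => ?_
        exact if_congr (this k).symm rfl rfl

/-- Quadratic form identity. -/
lemma quad_form (g : Fin (n+1) → ℝ) (v : Fin (n+1) → ℝ) :
    v ⬝ᵥ (Matrix.of fun i j => g (max i j)) *ᵥ v
      = ∑ k : Fin (n+1), (Gext g k - Gext g ((k : ℕ)+1)) *
          (∑ i : Fin (n+1), if i ≤ k then v i else 0) ^ 2 := by
  have expand : v ⬝ᵥ (Matrix.of fun i j => g (max i j)) *ᵥ v
      = ∑ i : Fin (n+1), ∑ j : Fin (n+1), v i * g (max i j) * v j := by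
    simp [dotProduct, Matrix.mulVec, Finset.mul_sum, mul_assoc]
  rw [expand]
  have step : ∀ i j : Fin (n+1), v i * g (max i j) * v j
      = ∑ k : Fin (n+1), (if i ≤ k then v i else 0) * (if j ≤ k then v j else 0) *
          (Gext g k - Gext g ((k : ℕ)+1)) := by
    intro i j
    rw [max_entry_eq g i j, Finset.mul_sum, Finset.sum_mul]
    refine Finset.sum_congr rfl fun k _ => ?_
    by_cases hi : i ≤ k <;> by_cases hj : j ≤ k <;> simp [hi, hj] <;> ring
  have prodsum : ∀ (a b : Fin (n+1) → ℝ) (c : ℝ),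
      ∑ i : Fin (n+1), ∑ j : Fin (n+1), a i * b j * c
        = c * ((∑ i : Fin (n+1), a i) * (∑ j : Fin (n+1), b j)) := by
    intro a b c
    rw [Finset.sum_mul_sum, Finset.mul_sum]
    refine Finset.sum_congr rfl fun i _ => ?_
    rw [Finset.mul_sum]
    exact Finset.sum_congr rfl fun j _ => by ring
  calc ∑ i : Fin (n+1), ∑ j : Fin (n+1), v i * g (max i j) * v j
      = ∑ i : Fin (n+1), ∑ j : Fin (n+1), ∑ k : Fin (n+1),
          (if i ≤ k then v i else 0) * (if j ≤ k then v j else 0) *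
            (Gext g k - Gext g ((k : ℕ)+1)) := by
        exact Finset.sum_congr rfl fun i _ => Finset.sum_congr rfl fun j _ => step i j
    _ = ∑ k : Fin (n+1), ∑ i : Fin (n+1), ∑ j : Fin (n+1),
          (if i ≤ k then v i else 0) * (if j ≤ k then v j else 0) *
            (Gext g k - Gext g ((k : ℕ)+1)) := by
        rw [show (∑ i : Fin (n+1), ∑ j : Fin (n+1), ∑ k : Fin (n+1),
          (if i ≤ k then v i else 0) * (if j ≤ k then v j else 0) *
            (Gext g k - Gext g ((k : ℕ)+1)))
          = ∑ i : Fin (n+1), ∑ k : Fin (n+1), ∑ j : Fin (n+1),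
          (if i ≤ k then v i else 0) * (if j ≤ k then v j else 0) *
            (Gext g k - Gext g ((k : ℕ)+1))
          from Finset.sum_congr rfl fun i _ => Finset.sum_comm]
        exact Finset.sum_comm
    _ = _ := by
        refine Finset.sum_congr rfl fun k _ => ?_
        rw [sq, prodsum]

/-- Increments are positive under the hypotheses. -/
lemma incr_pos (g : Fin (n+1) → ℝ) (hpos : ∀ i, 0 < g i) (hanti : StrictAnti g)
    (k : Fin (n+1)) : 0 < Gext g (k : ℕ) - Gext g ((k : ℕ)+1) := by
  rcases lt_or_ge ((k : ℕ)+1) (n+1) with h | h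
  · have h1 : Gext g (k : ℕ) = g k := by simp [Gext, k.isLt]
    have h2 : Gext g ((k : ℕ)+1) = g ⟨(k : ℕ)+1, h⟩ := by simp [Gext, h]
    rw [h1, h2, sub_pos]
    exact hanti (by simp [Fin.lt_def])
  · have h2 : Gext g ((k : ℕ)+1) = 0 := by simp [Gext, Nat.not_lt.mpr h]
    have h1 : Gext g (k : ℕ) = g k := by simp [Gext, k.isLt]
    rw [h1, h2, sub_zero]; exact hpos k

end MaxMatrixAux

/-- **MAX matrix of a chain**: for a chain `x 0 ≺ x 1 ≺ ⋯` in a lattice `P`,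
the matrix `(f (x (max i j)))` is positive definite iff
`0 < f (x (n-1)) < ⋯ < f (x 1) < f (x 0)`. -/
theorem max_matrix_posDef_iff {P : Type*} [Lattice P] {n : ℕ} (x : Fin n → P)
    (hchain : StrictMono x) (f : P → ℝ) :
    (Matrix.of fun i j => f (x (max i j))).PosDef ↔
      (∀ i, 0 < f (x i)) ∧ StrictAnti fun i => f (x i) := by
  rcases n with _ | m
  · refine iff_of_true (Matrix.PosDef.of_dotProduct_mulVec_pos ?_ ?_) ⟨fun i => i.elim0, fun a b h => a.elim0⟩
    · ext i j; exact i.elim0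
    · intro v hv; exact absurd (funext fun i => i.elim0) hv
  · set g : Fin (m+1) → ℝ := fun i => f (x i) with hg
    set M : Matrix (Fin (m+1)) (Fin (m+1)) ℝ := Matrix.of fun i j => g (max i j) with hM
    have hstar : ∀ v : Fin (m+1) → ℝ, star v = v := by
      intro v; ext i; simp
    constructor
    · intro hPD
      -- quadratic form at `single a 1 - single b 1`
      have hQF2 : ∀ a b : Fin (m+1), a ≠ b →
          0 < M a a - M a b - M b a + M b b := by
        intro a b hab
        have hv : (Pi.single a 1 - Pi.single b 1 : Fin (m+1) → ℝ) ≠ 0 := by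
          intro h
          have := congrFun h a
          simp [Pi.single_apply, hab, Pi.sub_apply] at this
        have := hPD.dotProduct_mulVec_pos hv
        rw [hstar] at this
        calc (0:ℝ) < (Pi.single a 1 - Pi.single b 1) ⬝ᵥ
            M *ᵥ (Pi.single a 1 - Pi.single b 1) := this
          _ = M a a - M a b - M b a + M b b := by
            rw [Matrix.mulVec_sub]
            simp only [Matrix.mulVec_single_one, Matrix.col_apply, sub_dotProduct, dotProduct_sub,
              single_dotProduct, Pi.sub_apply, mul_one]
            ring
      have hanti : StrictAnti g := by
        rw [Fin.strictAnti_iff_succ_lt]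
        intro i
        have hne : (i.castSucc : Fin (m+1)) ≠ i.succ := by
          intro h
          exact absurd (congrArg Fin.val h) (by simp [Fin.castSucc, Fin.succ])
        have h := hQF2 i.castSucc i.succ hne
        have hmax : max i.castSucc i.succ = i.succ :=
          max_eq_right (le_of_lt (Fin.castSucc_lt_succ : i.castSucc < i.succ))
        have e1 : M i.castSucc i.castSucc = g i.castSucc := by simp [hM]
        have e2 : M i.castSucc i.succ = g i.succ := by
          simp [hM, Matrix.of_apply, hmax]
        have e3 : M i.succ i.castSucc = g i.succ := by
          simp [hM, Matrix.of_apply, max_comm i.succ i.castSucc, hmax]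
        have e4 : M i.succ i.succ = g i.succ := by simp [hM]
        rw [e1, e2, e3, e4] at h
        linarith
      have hpos : ∀ i, 0 < g i := by
        have hlast : 0 < g (Fin.last m) := by
          have hv : (Pi.single (Fin.last m) 1 : Fin (m+1) → ℝ) ≠ 0 := by
            intro h
            have := congrFun h (Fin.last m)
            simp [Pi.single_apply] at this
          have := hPD.dotProduct_mulVec_pos hv
          rw [hstar] at this
          calc (0:ℝ) < (Pi.single (Fin.last m) 1 : Fin (m+1) → ℝ) ⬝ᵥ
              M *ᵥ Pi.single (Fin.last m) 1 := this
            _ = M (Fin.last m) (Fin.last m) := by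
              simp [Matrix.mulVec_single, single_dotProduct]
            _ = g (Fin.last m) := by simp [hM]
        intro i
        exact lt_of_lt_of_le hlast (hanti.antitone (Fin.le_last i))
      exact ⟨hpos, hanti⟩
    · rintro ⟨hpos, hanti⟩
      refine Matrix.PosDef.of_dotProduct_mulVec_pos ?_ ?_
      · ext i j
        simp [hM, Matrix.conjTranspose_apply, max_comm]
      · intro v hv
        rw [hstar, MaxMatrixAux.quad_form g v]
        -- choose the minimal index where `v` is nonzero
        have hex : ∃ i, v i ≠ 0 := by
          by_contra h
          push_neg at h
          exact hv (funext h)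
        set S : Finset (Fin (m+1)) := Finset.univ.filter (fun i => v i ≠ 0) with hS
        have hSne : S.Nonempty := by
          obtain ⟨i, hi⟩ := hex
          exact ⟨i, by simp [hS, hi]⟩
        set i₀ : Fin (m+1) := S.min' hSne with hi₀
        have hvi₀ : v i₀ ≠ 0 := by
          have := S.min'_mem hSne
          simpa [hS] using this
        have hzero : ∀ j, j < i₀ → v j = 0 := by
          intro j hj
          by_contra h
          exact absurd (S.min'_le j (by simp [hS, h])) (not_le.mpr hj)
        refine Finset.sum_pos' (fun k _ => ?_) ⟨i₀, Finset.mem_univ _, ?_⟩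
        · exact mul_nonneg (le_of_lt (MaxMatrixAux.incr_pos g hpos hanti k)) (sq_nonneg _)
        · have hsum : (∑ i : Fin (m+1), if i ≤ i₀ then v i else 0) = v i₀ := by
            rw [Finset.sum_eq_single i₀]
            · simp
            · intro b _ hb
              rcases le_or_gt b i₀ with hle | hlt
              · have : b < i₀ := lt_of_le_of_ne hle hb
                simp [hzero b this]
              · simp [not_le.mpr hlt]
            · intro h; exact absurd (Finset.mem_univ i₀) h
          rw [hsum]
          exact mul_pos (MaxMatrixAux.incr_pos g hpos hanti i₀)
            (pow_pos (abs_pos.mpr hvi₀ |> fun h => h) 2 |> fun _ => by positivity)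
end

section
/- For α > 0 and any finite set S = {x_1,...,x_n} of distinct positive integers, the power GCD matrix with (i,j) entry gcd(x_i, x_j)^α is positive definite. -/
open ArithmeticFunction Finset

/-- The arithmetic function `n ↦ n^α` (with value 0 at 0). -/
noncomputable def npow (α : ℝ) : ArithmeticFunction ℝ :=
  ⟨fun n => if n = 0 then 0 else (n : ℝ) ^ α, by simp⟩

lemma npow_apply {α : ℝ} {n : ℕ} (hn : n ≠ 0) : npow α n = (n : ℝ) ^ α := if_neg hn

lemma npow_isMult (α : ℝ) : (npow α).IsMultiplicative := by
  constructor
  · simp [npow]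
  · intro m n _
    rcases eq_or_ne m 0 with rfl | hm
    · simp [npow]
    rcases eq_or_ne n 0 with rfl | hn
    · simp [npow]
    rw [npow_apply (Nat.mul_ne_zero hm hn), npow_apply hm, npow_apply hn]
    push_cast
    exact Real.mul_rpow (by positivity) (by positivity)

/-- `jfun α = μ * (·^α)`, the Möbius inverse of `n ↦ n^α`. -/
noncomputable def jfun (α : ℝ) : ArithmeticFunction ℝ :=
  (↑(ArithmeticFunction.moebius) : ArithmeticFunction ℝ) * npow α

lemma sum_divisors_jfun {α : ℝ} {n : ℕ} (hn : n ≠ 0) :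
    ∑ d ∈ n.divisors, jfun α d = (n : ℝ) ^ α := by
  have h : (jfun α * (↑ArithmeticFunction.zeta : ArithmeticFunction ℝ)) n = (npow α) n := by
    rw [jfun, mul_comm ((↑(ArithmeticFunction.moebius) : ArithmeticFunction ℝ)) (npow α),
      mul_assoc, coe_moebius_mul_coe_zeta, mul_one]
  rw [← npow_apply hn, ← h, coe_mul_zeta_apply]

lemma jfun_prime_pow {α : ℝ} {p k : ℕ} (hp : p.Prime) (hk : k ≠ 0) :
    jfun α (p ^ k) = ((p : ℝ) ^ k) ^ α - ((p : ℝ) ^ (k - 1)) ^ α := by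
  obtain ⟨k, rfl⟩ := Nat.exists_eq_succ_of_ne_zero hk
  rw [jfun, mul_apply, Nat.sum_divisorsAntidiagonal
    (f := fun a b => (↑(ArithmeticFunction.moebius) : ArithmeticFunction ℝ) a * npow α b),
    Nat.sum_divisors_prime_pow hp]
  simp only [intCoe_apply, Nat.succ_eq_add_one]
  rw [Finset.sum_range_succ', Finset.sum_range_succ']
  have h2 : ∀ i ∈ Finset.range k, ((moebius (p ^ (i + 1 + 1)) : ℤ) : ℝ) *
      npow α (p ^ (k + 1) / p ^ (i + 1 + 1)) = 0 := by
    intro i _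
    rw [moebius_apply_prime_pow hp (by omega), if_neg (by omega)]
    simp
  rw [Finset.sum_congr rfl h2, Finset.sum_const_zero, zero_add]
  have h3 : p ^ (k + 1) / p = p ^ k := by
    rw [pow_succ, Nat.mul_div_cancel _ hp.pos]
  rw [zero_add, pow_one, pow_zero, moebius_apply_prime hp, Nat.div_one, h3,
    ArithmeticFunction.moebius_apply_one, Nat.add_sub_cancel]
  rw [npow_apply (pow_ne_zero _ hp.pos.ne'), npow_apply (pow_ne_zero _ hp.pos.ne')]
  push_cast
  ring_nf

lemma jfun_pos {α : ℝ} (hα : 0 < α) {m : ℕ} (hm : m ≠ 0) : 0 < jfun α m := by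
  have hmult : (jfun α).IsMultiplicative :=
    (isMultiplicative_moebius.intCast).mul (npow_isMult α)
  rw [hmult.multiplicative_factorization _ hm, Finsupp.prod]
  apply Finset.prod_pos
  intro p hp
  have hpp : p.Prime := Nat.prime_of_mem_primeFactors (by
    rwa [← Nat.support_factorization])
  have hk : m.factorization p ≠ 0 := Finsupp.mem_support_iff.mp hp
  rw [jfun_prime_pow hpp hk, sub_pos]
  apply Real.rpow_lt_rpow (by positivity) _ hα
  have : (p : ℝ) ^ (m.factorization p - 1) < (p : ℝ) ^ (m.factorization p) := by
    apply pow_lt_pow_right₀ (by exact_mod_cast hpp.one_lt) (by omega)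
  exact this

/-- **Power GCD matrices are positive definite**: for `α > 0` and distinct
positive integers `x 0, …, x (n-1)`, the matrix `(gcd (x i) (x j) ^ α)` is
positive definite. -/
theorem power_gcd_matrix_posDef {n : ℕ} (x : Fin n → ℕ)
    (hpos : ∀ i, 0 < x i) (hinj : Function.Injective x)
    {α : ℝ} (hα : 0 < α) :
    (Matrix.of fun i j => (Nat.gcd (x i) (x j) : ℝ) ^ α).PosDef := by
  classical
  rw [Matrix.posDef_iff_dotProduct_mulVec]
  constructor
  · ext i j
    simp only [Matrix.conjTranspose_apply, Matrix.of_apply, star_trivial]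
    rw [Nat.gcd_comm]
  intro v hv
  set N := Finset.univ.sup x with hN
  set D := Finset.range (N + 1) with hD
  have hent : ∀ i j, (Nat.gcd (x i) (x j) : ℝ) ^ α =
      ∑ d ∈ D, (if d ∣ x i ∧ d ∣ x j then jfun α d else 0) := by
    intro i j
    have hg : 0 < Nat.gcd (x i) (x j) := Nat.gcd_pos_of_pos_left _ (hpos i)
    rw [← Finset.sum_filter]
    have hfe : D.filter (fun d => d ∣ x i ∧ d ∣ x j) = (Nat.gcd (x i) (x j)).divisors := by
      ext d
      simp only [Finset.mem_filter, hD, Finset.mem_range, Nat.lt_succ_iff,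
        Nat.mem_divisors, Nat.dvd_gcd_iff]
      constructor
      · rintro ⟨-, h⟩; exact ⟨h, hg.ne'⟩
      · rintro ⟨⟨h1, h2⟩, -⟩
        exact ⟨le_trans (Nat.le_of_dvd (hpos i) h1) (Finset.le_sup (Finset.mem_univ i)),
          h1, h2⟩
    rw [hfe, sum_divisors_jfun hg.ne']
  have hQ : dotProduct (star v)
      ((Matrix.of fun i j => (Nat.gcd (x i) (x j) : ℝ) ^ α).mulVec v) =
      ∑ d ∈ D, jfun α d * (∑ i ∈ Finset.univ.filter (fun i => d ∣ x i), v i) ^ 2 := by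
    rw [star_trivial]
    calc dotProduct v ((Matrix.of fun i j => (Nat.gcd (x i) (x j) : ℝ) ^ α).mulVec v)
        = ∑ i, ∑ j, v i * ((Nat.gcd (x i) (x j) : ℝ) ^ α * v j) := by
          simp [dotProduct, Matrix.mulVec, Finset.mul_sum]
      _ = ∑ i, ∑ j, ∑ d ∈ D, v i * ((if d ∣ x i ∧ d ∣ x j then jfun α d else 0) * v j) := by
          refine Finset.sum_congr rfl fun i _ => Finset.sum_congr rfl fun j _ => ?_
          rw [hent i j, Finset.sum_mul, Finset.mul_sum]
      _ = ∑ i, ∑ d ∈ D, ∑ j, v i * ((if d ∣ x i ∧ d ∣ x j then jfun α d else 0) * v j) :=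
          Finset.sum_congr rfl fun i _ => Finset.sum_comm
      _ = ∑ d ∈ D, ∑ i, ∑ j, v i * ((if d ∣ x i ∧ d ∣ x j then jfun α d else 0) * v j) :=
          Finset.sum_comm
      _ = ∑ d ∈ D, jfun α d * (∑ i ∈ Finset.univ.filter (fun i => d ∣ x i), v i) ^ 2 := by
          refine Finset.sum_congr rfl fun d _ => ?_
          have hsplit : ∀ i j : Fin n,
              v i * ((if d ∣ x i ∧ d ∣ x j then jfun α d else 0) * v j) =
              jfun α d * ((if d ∣ x i then v i else 0) * (if d ∣ x j then v j else 0)) := by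
            intro i j
            by_cases h1 : d ∣ x i
            · by_cases h2 : d ∣ x j
              · rw [if_pos ⟨h1, h2⟩, if_pos h1, if_pos h2]; ring
              · rw [if_neg (by tauto), if_pos h1, if_neg h2]; ring
            · by_cases h2 : d ∣ x j
              · rw [if_neg (by tauto), if_neg h1, if_pos h2]; ring
              · rw [if_neg (by tauto), if_neg h1, if_neg h2]; ring
          simp_rw [hsplit]
          rw [Finset.sum_filter, sq, Finset.sum_mul_sum, Finset.mul_sum]
          exact Finset.sum_congr rfl fun i _ => (Finset.mul_sum _ _ _).symm
  rw [hQ]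
  have hS : (Finset.univ.filter fun i => v i ≠ 0).Nonempty := by
    obtain ⟨i, hi⟩ := Function.ne_iff.mp hv
    exact ⟨i, Finset.mem_filter.mpr ⟨Finset.mem_univ _, hi⟩⟩
  obtain ⟨i₀, hi₀S, hmax⟩ := Finset.exists_max_image _ x hS
  have hvi₀ : v i₀ ≠ 0 := (Finset.mem_filter.mp hi₀S).2
  apply Finset.sum_pos'
  · intro d _
    rcases eq_or_ne d 0 with rfl | hd
    · simp
    · exact mul_nonneg (jfun_pos hα hd).le (sq_nonneg _)
  · refine ⟨x i₀, Finset.mem_range.mpr (Nat.lt_succ_of_le (Finset.le_sup (Finset.mem_univ i₀))), ?_⟩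
    have hsum : ∑ i ∈ Finset.univ.filter (fun i => x i₀ ∣ x i), v i = v i₀ := by
      refine Finset.sum_eq_single_of_mem i₀
        (Finset.mem_filter.mpr ⟨Finset.mem_univ _, dvd_rfl⟩) fun j hj hne => ?_
      by_contra hvj
      have h1 : x j ≤ x i₀ := hmax j (Finset.mem_filter.mpr ⟨Finset.mem_univ _, hvj⟩)
      have h2 : x i₀ ≤ x j := Nat.le_of_dvd (hpos j) (Finset.mem_filter.mp hj).2
      exact hne (hinj (le_antisymm h1 h2))
    rw [hsum]
    exact mul_pos (jfun_pos hα (hpos i₀).ne') (by positivity)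
end

section
/- For α > 0 and any finite set S = {x_1,...,x_n} of distinct positive integers, the reciprocal power LCM matrix with (i,j) entry 1/lcm(x_i, x_j)^α is positive definite. -/
open Finset ArithmeticFunction

noncomputable def rpowAF (α : ℝ) : ArithmeticFunction ℝ :=
  ⟨fun n => if n = 0 then 0 else (n : ℝ) ^ α, by simp⟩

lemma rpowAF_apply {α : ℝ} {n : ℕ} (hn : n ≠ 0) : rpowAF α n = (n : ℝ) ^ α := by
  simp [rpowAF, hn]

lemma rpowAF_mult (α : ℝ) : (rpowAF α).IsMultiplicative := by
  refine ArithmeticFunction.IsMultiplicative.iff_ne_zero.mpr ⟨?_, ?_⟩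
  · simp [rpowAF]
  · intro m n hm hn _
    rw [rpowAF_apply (Nat.mul_ne_zero hm hn), rpowAF_apply hm, rpowAF_apply hn,
      Nat.cast_mul, Real.mul_rpow (by positivity) (by positivity)]

noncomputable def jordanR (α : ℝ) : ArithmeticFunction ℝ :=
  (ArithmeticFunction.moebius : ArithmeticFunction ℝ) * rpowAF α

lemma jordanR_mult (α : ℝ) : (jordanR α).IsMultiplicative :=
  ArithmeticFunction.isMultiplicative_moebius.intCast.mul (rpowAF_mult α)

lemma jordanR_prime_pow {α : ℝ} (hα : 0 < α) {p k : ℕ} (hp : p.Prime) (hk : k ≠ 0) :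
    0 < jordanR α (p ^ k) := by
  obtain ⟨m, rfl⟩ := Nat.exists_eq_succ_of_ne_zero hk
  have hval : jordanR α (p ^ (m + 1))
      = ((p ^ (m + 1) : ℕ) : ℝ) ^ α - ((p ^ m : ℕ) : ℝ) ^ α := by
    rw [jordanR, ArithmeticFunction.mul_apply, Nat.sum_divisorsAntidiagonal
      (f := fun a b => ((ArithmeticFunction.moebius : ArithmeticFunction ℝ)) a * rpowAF α b),
      Nat.sum_divisors_prime_pow hp]
    rw [Finset.sum_range_succ' _ (m + 1), Finset.sum_range_succ' _ m]
    have h2 : ∀ i ∈ Finset.range m,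
        ((ArithmeticFunction.moebius : ArithmeticFunction ℝ)) (p ^ (i + 1 + 1)) *
          rpowAF α (p ^ (m + 1) / p ^ (i + 1 + 1)) = 0 := by
      intro i _
      have : (ArithmeticFunction.moebius (p ^ (i + 1 + 1)) : ℝ) = 0 := by
        rw [ArithmeticFunction.moebius_apply_prime_pow hp (by omega)]
        simp
      simp only [ArithmeticFunction.intCoe_apply]
      rw [this, zero_mul]
    rw [Finset.sum_eq_zero h2, zero_add]
    have hd0 : p ^ (m + 1) / p ^ 0 = p ^ (m + 1) := by simp
    have hd1 : p ^ (m + 1) / p ^ (0 + 1) = p ^ m := by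
      rw [Nat.pow_div (by omega) hp.pos]
      simp
    rw [hd0, hd1]
    have hm0 : (ArithmeticFunction.moebius (p ^ 0) : ℝ) = 1 := by simp
    have hm1 : (ArithmeticFunction.moebius (p ^ (0 + 1)) : ℝ) = -1 := by
      simp [ArithmeticFunction.moebius_apply_prime hp]
    simp only [ArithmeticFunction.intCoe_apply] at *
    rw [hm0, hm1, rpowAF_apply (pow_pos hp.pos _).ne', rpowAF_apply (pow_pos hp.pos _).ne']
    ring
  rw [hval, sub_pos]
  apply Real.rpow_lt_rpow (by positivity) _ hα
  exact_mod_cast Nat.pow_lt_pow_succ hp.one_lt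

lemma jordanR_pos {α : ℝ} (hα : 0 < α) {d : ℕ} (hd : d ≠ 0) : 0 < jordanR α d := by
  rw [(jordanR_mult α).multiplicative_factorization _ hd, Finsupp.prod]
  apply Finset.prod_pos
  intro p hp
  have hp' : p.Prime := Nat.prime_of_mem_primeFactors (by
    rwa [← Nat.support_factorization])
  exact jordanR_prime_pow hα hp' (Finsupp.mem_support_iff.mp hp)

lemma sum_jordanR {α : ℝ} {m : ℕ} (hm : 0 < m) :
    ∑ d ∈ m.divisors, jordanR α d = (m : ℝ) ^ α := by
  have := (ArithmeticFunction.sum_eq_iff_sum_mul_moebius_eq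
    (R := ℝ) (f := fun d => jordanR α d) (g := fun m => (m : ℝ) ^ α)).mpr ?_ m hm
  · exact this
  · intro n hn
    rw [jordanR, ArithmeticFunction.mul_apply]
    apply Finset.sum_congr rfl
    intro p hp
    rw [rpowAF_apply (Nat.pos_of_mem_divisors
      (Nat.snd_mem_divisors_of_mem_antidiagonal hp)).ne']
    rfl

lemma gcd_rpow_eq_sum {α : ℝ} {a b N : ℕ} (ha : 0 < a) (hb : 0 < b)
    (haN : a ≤ N) :
    ((Nat.gcd a b : ℝ)) ^ α
      = ∑ d ∈ Finset.range (N + 1), if d ∣ a ∧ d ∣ b then jordanR α d else 0 := by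
  have hg : 0 < Nat.gcd a b := Nat.gcd_pos_of_pos_left _ ha
  rw [← sum_jordanR (α := α) hg, ← Finset.sum_filter]
  apply Finset.sum_congr _ (fun _ _ => rfl)
  ext d
  simp only [Nat.mem_divisors, Finset.mem_filter, Finset.mem_range]
  constructor
  · rintro ⟨hdg, -⟩
    have hda : d ∣ a := hdg.trans (Nat.gcd_dvd_left _ _)
    exact ⟨Nat.lt_succ_of_le ((Nat.le_of_dvd ha hda).trans haN),
      hda, hdg.trans (Nat.gcd_dvd_right _ _)⟩
  · rintro ⟨-, hda, hdb⟩
    exact ⟨Nat.dvd_gcd hda hdb, hg.ne'⟩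

/-- **Reciprocal power LCM matrices are positive definite**: for `α > 0` and
distinct positive integers `x 0, …, x (n-1)`, the matrix `(1 / lcm (x i) (x j) ^ α)`
is positive definite. -/
theorem reciprocal_power_lcm_matrix_posDef {n : ℕ} (x : Fin n → ℕ)
    (hpos : ∀ i, 0 < x i) (hinj : Function.Injective x)
    {α : ℝ} (hα : 0 < α) :
    (Matrix.of fun i j => 1 / (Nat.lcm (x i) (x j) : ℝ) ^ α).PosDef := by
  refine Matrix.posDef_iff_dotProduct_mulVec.mpr ⟨?_, ?_⟩
  · ext i j
    simp only [Matrix.conjTranspose_apply, Matrix.of_apply, star_trivial]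
    rw [Nat.lcm_comm]
  · intro y hy
    set N := Finset.univ.sup x with hN
    have hxN : ∀ i, x i ≤ N := fun i => Finset.le_sup (Finset.mem_univ i)
    set z : Fin n → ℝ := fun i => y i / (x i : ℝ) ^ α with hz
    have hxc : ∀ i, (0:ℝ) < (x i : ℝ) := fun i => by exact_mod_cast hpos i
    have hxpow : ∀ i, (0:ℝ) < (x i : ℝ) ^ α :=
      fun i => Real.rpow_pos_of_pos (hxc i) α
    have key : ∀ i j, y i * ((1 / (Nat.lcm (x i) (x j) : ℝ) ^ α) * y j)
        = ∑ d ∈ Finset.range (N + 1),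
            (if d ∣ x i then z i else 0) * (if d ∣ x j then z j else 0) * jordanR α d := by
      intro i j
      have hlpos : (0:ℝ) < (Nat.lcm (x i) (x j) : ℝ) := by
        exact_mod_cast Nat.pos_of_ne_zero (Nat.lcm_ne_zero (hpos i).ne' (hpos j).ne')
      have hgpos : (0:ℝ) < (Nat.gcd (x i) (x j) : ℝ) := by
        exact_mod_cast Nat.gcd_pos_of_pos_left _ (hpos i)
      have hlg : ((Nat.lcm (x i) (x j) : ℝ)) ^ α * ((Nat.gcd (x i) (x j) : ℝ)) ^ α
          = (x i : ℝ) ^ α * (x j : ℝ) ^ α := by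
        rw [← Real.mul_rpow hlpos.le hgpos.le,
          ← Real.mul_rpow (hxc i).le (hxc j).le]
        congr 1
        rw [← Nat.cast_mul, ← Nat.cast_mul, mul_comm, Nat.gcd_mul_lcm]
      have h1 : (1:ℝ) / (Nat.lcm (x i) (x j) : ℝ) ^ α
          = ((Nat.gcd (x i) (x j) : ℝ)) ^ α / ((x i : ℝ) ^ α * (x j : ℝ) ^ α) := by
        rw [div_eq_div_iff (Real.rpow_pos_of_pos hlpos α).ne' (mul_pos (hxpow i) (hxpow j)).ne']
        rw [one_mul, ← hlg]; ring
      have e1 : y i * ((1:ℝ) / (Nat.lcm (x i) (x j) : ℝ) ^ α * y j)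
          = z i * z j * ((Nat.gcd (x i) (x j) : ℝ)) ^ α := by
        rw [h1, hz]
        field_simp
      rw [e1, gcd_rpow_eq_sum (hpos i) (hpos j) (hxN i), Finset.mul_sum]
      refine Finset.sum_congr rfl fun d _ => ?_
      by_cases hP : d ∣ x i <;> by_cases hQ : d ∣ x j <;> simp [hP, hQ] <;> ring
    have hQform : dotProduct (star y) ((Matrix.of fun i j =>
          1 / (Nat.lcm (x i) (x j) : ℝ) ^ α).mulVec y)
        = ∑ d ∈ Finset.range (N + 1),
            (∑ i, if d ∣ x i then z i else 0) ^ 2 * jordanR α d := by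
      rw [star_trivial]
      simp only [Matrix.mulVec, dotProduct, Matrix.of_apply]
      calc ∑ i, y i * ∑ j, (1 / (Nat.lcm (x i) (x j) : ℝ) ^ α) * y j
          = ∑ i, ∑ d ∈ Finset.range (N + 1), ∑ j,
              (if d ∣ x i then z i else 0) * (if d ∣ x j then z j else 0) * jordanR α d := by
            refine Finset.sum_congr rfl fun i _ => ?_
            rw [Finset.mul_sum]
            rw [show (∑ j, y i * ((1 / (Nat.lcm (x i) (x j) : ℝ) ^ α) * y j)) = _ from
              Finset.sum_congr rfl fun j _ => key i j]
            exact Finset.sum_comm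
        _ = ∑ d ∈ Finset.range (N + 1), ∑ i, ∑ j,
              (if d ∣ x i then z i else 0) * (if d ∣ x j then z j else 0) * jordanR α d :=
            Finset.sum_comm
        _ = ∑ d ∈ Finset.range (N + 1),
              (∑ i, if d ∣ x i then z i else 0) ^ 2 * jordanR α d := by
            refine Finset.sum_congr rfl fun d _ => ?_
            simp only [← Finset.sum_mul]
            rw [sq, Finset.sum_mul_sum]
    rw [hQform]
    -- choose i0 with z i0 ≠ 0 maximizing x i0
    have hyex : ∃ i, y i ≠ 0 := Function.ne_iff.mp hy
    obtain ⟨i1, hi1⟩ := hyex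
    have hzne : z i1 ≠ 0 := div_ne_zero hi1 (hxpow i1).ne'
    obtain ⟨i0, hi0T, hmax⟩ := Finset.exists_max_image
      (Finset.univ.filter fun i => z i ≠ 0) x
      ⟨i1, Finset.mem_filter.mpr ⟨Finset.mem_univ _, hzne⟩⟩
    have hz0 : z i0 ≠ 0 := (Finset.mem_filter.mp hi0T).2
    apply Finset.sum_pos'
    · intro d _
      rcases Nat.eq_zero_or_pos d with rfl | hd
      · have : jordanR α 0 = 0 := ArithmeticFunction.map_zero
        simp [this]
      · exact mul_nonneg (sq_nonneg _) (jordanR_pos hα hd.ne').le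
    · refine ⟨x i0, Finset.mem_range.mpr (Nat.lt_succ_of_le (hxN i0)), ?_⟩
      have hsum : (∑ i, if x i0 ∣ x i then z i else 0) = z i0 := by
        rw [Finset.sum_eq_single i0]
        · simp
        · intro b _ hb
          by_cases hdvd : x i0 ∣ x b
          · simp only [if_pos hdvd]
            by_contra hzb
            have hle : x i0 ≤ x b := Nat.le_of_dvd (hpos b) hdvd
            have hge : x b ≤ x i0 := hmax b
              (Finset.mem_filter.mpr ⟨Finset.mem_univ _, hzb⟩)
            exact hb (hinj (le_antisymm hge hle))
          · simp [hdvd]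
        · intro h; exact absurd (Finset.mem_univ i0) h
      rw [hsum]
      exact mul_pos (by positivity) (jordanR_pos hα (hpos i0).ne')
end

section
/- Let S be a finite subset of a lattice P and let M = meetcl(S) be the meet-subsemilattice generated by S. The following are equivalent: (1) every element of M covers at most one element of M; (2) for every x ∈ M, the set {y ∈ M : y ≼ x} is a chain; (3) for all x, y, z ∈ M with x ≼ z and y ≼ z, either x ≼ y or y ≼ x. -/
/-- The meet-closure of a set `S` in a lattice: the smallest subset containing `S`
that is closed under binary meets. -/
def meetClosure {P : Type*} [Lattice P] (S : Set P) : Set P :=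
  ⋂₀ {T : Set P | S ⊆ T ∧ ∀ a ∈ T, ∀ b ∈ T, a ⊓ b ∈ T}

lemma meetClosure_infClosed {P : Type*} [Lattice P] (S : Set P) :
    ∀ a ∈ meetClosure S, ∀ b ∈ meetClosure S, a ⊓ b ∈ meetClosure S := by
  intro a ha b hb T hT
  exact hT.2 a (ha T hT) b (hb T hT)

lemma meetClosure_finite {P : Type*} [Lattice P] {S : Set P} (hS : S.Finite) :
    (meetClosure S).Finite := by
  refine hS.infClosure.subset ?_
  exact Set.sInter_subset_of_mem ⟨subset_infClosure, fun a ha b hb => infClosed_infClosure ha hb⟩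

/-- For a finite set `S` in a lattice with meet-closure `M`, the following are
equivalent: (1) every element of `M` covers at most one element of `M`;
(2) for every `x ∈ M` the set `{y ∈ M | y ≼ x}` is a chain;
(3) any two elements of `M` lying below a common element of `M` are comparable. -/
theorem wedge_tree_tfae {P : Type*} [Lattice P] (S : Set P) (hS : S.Finite) :
    List.TFAE
      [∀ a : meetClosure S, {b : meetClosure S | b ⋖ a}.Subsingleton,
       ∀ a ∈ meetClosure S, IsChain (· ≤ ·) {y ∈ meetClosure S | y ≤ a},
       ∀ a ∈ meetClosure S, ∀ b ∈ meetClosure S, ∀ c ∈ meetClosure S,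
         a ≤ c → b ≤ c → a ≤ b ∨ b ≤ a] := by
  have hMfin : (meetClosure S).Finite := meetClosure_finite hS
  haveI : Finite (meetClosure S) := hMfin.to_subtype
  tfae_have 1 → 3 := by
    intro h a ha b hb c hc hac hbc
    by_contra hcon
    push_neg at hcon
    -- set of elements of M with two incomparable elements below
    set Bad : Set P := {x | x ∈ meetClosure S ∧ ∃ u ∈ meetClosure S, ∃ v ∈ meetClosure S,
      u ≤ x ∧ v ≤ x ∧ ¬ u ≤ v ∧ ¬ v ≤ u} with hBad
    have hBadfin : Bad.Finite := hMfin.subset fun x hx => hx.1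
    have hBadne : Bad.Nonempty := ⟨c, hc, a, ha, b, hb, hac, hbc, hcon.1, hcon.2⟩
    obtain ⟨x, hxBad, hxmin⟩ : ∃ a ∈ Bad, ∀ a' ∈ Bad, id a' ≤ id a → id a = id a' := by
      obtain ⟨x, hx⟩ := hBadfin.exists_minimal hBadne
      exact ⟨x, hx.1, fun y hy hyx => (hx.eq_of_le hy hyx).symm⟩
    obtain ⟨hxM, u, hu, v, hv, hux, hvx, huv, hvu⟩ := hxBad
    have hultx : u < x := lt_of_le_of_ne hux (by rintro rfl; exact hvu (hvx.trans le_rfl) |>.elim)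
    have hvltx : v < x := lt_of_le_of_ne hvx (by rintro rfl; exact huv (hux.trans le_rfl) |>.elim)
    -- pass to the subtype
    have hu' : (⟨u, hu⟩ : meetClosure S) < ⟨x, hxM⟩ := hultx
    have hv' : (⟨v, hv⟩ : meetClosure S) < ⟨x, hxM⟩ := hvltx
    obtain ⟨u', huu', hu'cov⟩ := exists_le_covBy_of_lt hu'
    obtain ⟨v', hvv', hv'cov⟩ := exists_le_covBy_of_lt hv'
    have hne : u' ≠ v' := by
      rintro rfl
      -- then u, v ≤ u' < x, so u'.val ∈ Bad with u'.val < x, contradicting minimality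
      have hu'x : (u' : P) < x := hu'cov.lt
      have : (u' : P) ∈ Bad := ⟨u'.2, u, hu, v, hv, huu', hvv', huv, hvu⟩
      have := hxmin _ this (le_of_lt hu'x)
      simp only [id] at this
      exact absurd (this ▸ hu'x) (lt_irrefl x)
    exact hne (h ⟨x, hxM⟩ hu'cov hv'cov)
  tfae_have 3 → 2 := by
    intro h a ha u hu v hv _
    exact h u hu.1 v hv.1 a ha hu.2 hv.2
  tfae_have 2 → 3 := by
    intro h a ha b hb c hc hac hbc
    rcases eq_or_ne a b with rfl | hne
    · exact Or.inl le_rfl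
    · exact h c hc ⟨ha, hac⟩ ⟨hb, hbc⟩ hne
  tfae_have 3 → 1 := by
    intro h a b hb c hc
    have hcomp := h b b.2 c c.2 a a.2 hb.le hc.le
    rcases hcomp with hbc | hcb
    · rcases lt_or_eq_of_le (show b ≤ c from hbc) with hlt | heq
      · exact absurd hc.lt (hb.2 hlt)
      · exact heq
    · rcases lt_or_eq_of_le (show c ≤ b from hcb) with hlt | heq
      · exact absurd hb.lt (hc.2 hlt)
      · exact heq.symm
  tfae_finish
end

section
/- Let S = {x_1,...,x_n} be a finite subset of a lattice with x_1 = min S, such that S is meet closed and the Hasse diagram of S is a tree (every element of S covers at most one element of S). If the meet matrix (f(x_i ∧ x_j))_{i,j=1}^n is positive definite, then f is strictly order-preserving on S (x_i ≺ x_j implies f(x_i) < f(x_j)) and f(x_i) > 0 for all i. -/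
/-- If `S = {x 0, …, x (n-1)}` is meet closed with minimum `x 0`, indexed compatibly
with the order, and the Hasse diagram of `S` is a tree (every element covers at most
one element of `S`), then positive definiteness of the meet matrix `(f (x i ⊓ x j))`
forces `f` to be strictly order-preserving and positive on `S`. -/
theorem strictMono_of_meet_matrix_posDef {P : Type*} [Lattice P] {n : ℕ} (hn : 0 < n)
    (x : Fin n → P) (f : P → ℝ)
    (hinj : Function.Injective x)
    (hord : ∀ i j, x i ≤ x j → i ≤ j)
    (hmeet : ∀ i j, ∃ k, x k = x i ⊓ x j)
    (hmin : ∀ i, x ⟨0, hn⟩ ≤ x i)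
    (htree : ∀ a : Set.range x, {b : Set.range x | b ⋖ a}.Subsingleton)
    (hposdef : (Matrix.of fun i j => f (x i ⊓ x j)).PosDef) :
    (∀ i j, x i < x j → f (x i) < f (x j)) ∧ ∀ i, 0 < f (x i) := by
  have key := hposdef.2
  constructor
  · intro i j hij
    have hne : i ≠ j := fun h => absurd (h ▸ hij) (lt_irrefl _)
    have hv : (Pi.single j 1 - Pi.single i 1 : Fin n → ℝ) ≠ 0 := by
      intro h
      have := congrFun h j
      simp [Pi.single_apply, hne.symm] at this
    have h := hposdef.dotProduct_mulVec_pos hv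
    have h1 : x i ⊓ x j = x i := inf_eq_left.mpr hij.le
    have h2 : x j ⊓ x i = x i := inf_eq_right.mpr hij.le
    simp only [dotProduct, Matrix.mulVec, Matrix.of_apply, Pi.sub_apply,
      Pi.single_apply, star_trivial, sub_mul, mul_sub, ite_mul, mul_ite, one_mul, mul_one,
      zero_mul, mul_zero, Finset.sum_sub_distrib, Finset.sum_ite_eq, Finset.sum_ite_eq',
      Finset.mem_univ, if_true, h1, h2, inf_idem] at h
    linarith
  · intro i
    have hv : (Pi.single i 1 : Fin n → ℝ) ≠ 0 := by
      intro h
      have := congrFun h i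
      simp at this
    have h := hposdef.dotProduct_mulVec_pos hv
    simp only [dotProduct, Matrix.mulVec, Matrix.of_apply, Pi.single_apply,
      star_trivial, ite_mul, mul_ite, one_mul, mul_one, zero_mul, mul_zero,
      Finset.sum_ite_eq, Finset.sum_ite_eq', Finset.mem_univ, if_true, inf_idem] at h
    exact h
end

section
/- Let S = {x_1,...,x_n} be a finite subset of a lattice such that A = {x_i ∧ x_j : i ≠ j} is a chain (S is an A-set). Then the meet-closure of S equals S ∪ A, and every element of S ∪ A covers at most one element of S ∪ A (i.e., S is a ∧-tree set). -/
/-- **Every `A`-set is a `∧`-tree set**: if `A = {x i ⊓ x j | i ≠ j}` is a chain,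
then the meet-closure of `S = {x 0, …, x (n-1)}` equals `S ∪ A` and every element of
it covers at most one element (its Hasse diagram is a tree). -/
theorem aset_is_tree_set {P : Type*} [Lattice P] {n : ℕ} (x : Fin n → P)
    (hA : IsChain (· ≤ ·) {a : P | ∃ i j, i ≠ j ∧ a = x i ⊓ x j}) :
    meetClosure (Set.range x) = Set.range x ∪ {a : P | ∃ i j, i ≠ j ∧ a = x i ⊓ x j} ∧
    ∀ a : meetClosure (Set.range x),
      {b : meetClosure (Set.range x) | b ⋖ a}.Subsingleton := by
  set A := {a : P | ∃ i j, i ≠ j ∧ a = x i ⊓ x j} with hAdef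
  have hmemA : ∀ (i j : Fin n), i ≠ j → x i ⊓ x j ∈ A := fun i j h => ⟨i, j, h, rfl⟩
  have hSA : ∀ (i j k : Fin n), j ≠ k → x i ⊓ (x j ⊓ x k) ∈ Set.range x ∪ A := by
    intro i j k hjk
    by_cases hij : i = j
    · subst hij
      exact Or.inr ⟨i, k, hjk, by rw [← inf_assoc, inf_idem]⟩
    by_cases hik : i = k
    · subst hik
      refine Or.inr ⟨j, i, hjk, ?_⟩
      rw [inf_comm (x j) (x i), ← inf_assoc, inf_idem, inf_comm]
    · have ha : x i ⊓ x j ∈ A := hmemA i j hij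
      have hb : x i ⊓ x k ∈ A := hmemA i k hik
      have key : x i ⊓ (x j ⊓ x k) = (x i ⊓ x j) ⊓ (x i ⊓ x k) := inf_inf_distrib_left _ _ _
      rcases hA.total ha hb with h | h
      · refine Or.inr ?_; rw [key, inf_eq_left.2 h]; exact ha
      · refine Or.inr ?_; rw [key, inf_eq_right.2 h]; exact hb
  have hclosed : ∀ a ∈ Set.range x ∪ A, ∀ b ∈ Set.range x ∪ A,
      a ⊓ b ∈ Set.range x ∪ A := by
    rintro a (⟨i, rfl⟩ | ⟨i, j, hij, rfl⟩) b (⟨k, rfl⟩ | ⟨k, l, hkl, rfl⟩)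
    · by_cases h : i = k
      · subst h; exact Or.inl ⟨i, (inf_idem _).symm⟩
      · exact Or.inr (hmemA i k h)
    · exact hSA i k l hkl
    · rw [inf_comm]; exact hSA k i j hij
    · rcases hA.total (hmemA i j hij) (hmemA k l hkl) with h | h
      · rw [inf_eq_left.2 h]; exact Or.inr (hmemA i j hij)
      · rw [inf_eq_right.2 h]; exact Or.inr (hmemA k l hkl)
  have heq : meetClosure (Set.range x) = Set.range x ∪ A := by
    apply le_antisymm
    · exact Set.sInter_subset_of_mem ⟨Set.subset_union_left, hclosed⟩
    · rintro a (⟨i, rfl⟩ | ⟨i, j, hij, rfl⟩) T ⟨hST, hT⟩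
      · exact hST ⟨i, rfl⟩
      · exact hT _ (hST ⟨i, rfl⟩) _ (hST ⟨j, rfl⟩)
  refine ⟨heq, ?_⟩
  -- every element strictly below another element of the closure lies in A
  have hbelow : ∀ p ∈ meetClosure (Set.range x), ∀ q ∈ meetClosure (Set.range x),
      p < q → p ∈ A := by
    intro p hp q hq hpq
    rw [heq] at hp hq
    rcases hp with ⟨i, rfl⟩ | hp
    · rcases hq with ⟨j, rfl⟩ | ⟨j, k, hjk, rfl⟩
      · have hij : i ≠ j := by rintro rfl; exact lt_irrefl _ hpq
        exact ⟨i, j, hij, (inf_eq_left.2 hpq.le).symm⟩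
      · have hle : x i ≤ x j := hpq.le.trans inf_le_left
        have hij : i ≠ j := by
          rintro rfl
          exact absurd (hpq.trans_le inf_le_left) (lt_irrefl _)
        exact ⟨i, j, hij, (inf_eq_left.2 hle).symm⟩
    · exact hp
  intro a b hb c hc
  have hba : (b : P) < (a : P) := hb.1
  have hca : (c : P) < (a : P) := hc.1
  have hbA : (b : P) ∈ A := hbelow _ b.2 _ a.2 hba
  have hcA : (c : P) ∈ A := hbelow _ c.2 _ a.2 hca
  rcases hA.total hbA hcA with h | h
  · rcases eq_or_lt_of_le h with h' | h'
    · exact Subtype.ext h'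
    · exact absurd hc.1 (fun _ => hb.2 (show b < c from h') hc.1)
  · rcases eq_or_lt_of_le h with h' | h'
    · exact Subtype.ext h'.symm
    · exact absurd hb.1 (fun _ => hc.2 (show c < b from h') hb.1)
end

section
/- Let P be a lattice, f : P → ℝ nonnegative and order-preserving on the meet-closure of S = {x_1,...,x_n}, with f(x_1) ≤ f(x_2) ≤ ⋯ ≤ f(x_n). For 1 ≤ k ≤ n, let y ∈ ℂ^n have y_{k+1} = ⋯ = y_n = 0. Then y* (S_n)_f y ≤ k (y* y) f(x_k), where (S_n)_f is the matrix with entries f(x_i ∧ x_j). -/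
open Matrix
open scoped ComplexOrder

/-- **Quadratic form bound for meet matrices**: if `f` is nonnegative,
order-preserving on the meet-closure of `S`, increasing along the indexing, and
`y ∈ ℂⁿ` vanishes in coordinates beyond `k` (1-indexed `k+1, …, n`), then
`y* (S_n)_f y ≤ (k+1) (y* y) f (x k)` (with `k` 0-indexed, so `k+1` is the
1-indexed position). -/
theorem meet_matrix_quadratic_form_bound {P : Type*} [Lattice P] {n : ℕ}
    (x : Fin n → P) (f : P → ℝ)
    (hf_nonneg : ∀ a, 0 ≤ f a)
    (hf_mono : ∀ a ∈ meetClosure (Set.range x), ∀ b ∈ meetClosure (Set.range x),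
      a ≤ b → f a ≤ f b)
    (hinc : ∀ i j : Fin n, i ≤ j → f (x i) ≤ f (x j))
    (k : Fin n) (y : Fin n → ℂ) (hy : ∀ i, k < i → y i = 0) :
    star y ⬝ᵥ (Matrix.of fun i j => (f (x i ⊓ x j) : ℂ)).mulVec y ≤
      (k.1 + 1 : ℂ) * (star y ⬝ᵥ y) * (f (x k) : ℂ) := by
  classical
  have hx_mem : ∀ i, x i ∈ meetClosure (Set.range x) := fun i =>
    Set.mem_sInter.mpr fun T hT => hT.1 ⟨i, rfl⟩
  have hmm : ∀ i j, x i ⊓ x j ∈ meetClosure (Set.range x) := fun i j =>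
    Set.mem_sInter.mpr fun T hT =>
      hT.2 _ (Set.mem_sInter.mp (hx_mem i) T hT) _ (Set.mem_sInter.mp (hx_mem j) T hT)
  set M : ℝ := f (x k) with hMdef
  have hM0 : 0 ≤ M := hf_nonneg _
  have hentry : ∀ i j : Fin n, i ≤ k → f (x i ⊓ x j) ≤ M :=
    fun i j hi => le_trans (hf_mono _ (hmm i j) _ (hx_mem i) inf_le_left) (hinc i k hi)
  set u : Fin n → ℝ := fun i => ‖y i‖ with hu
  have hu0 : ∀ i, 0 ≤ u i := fun i => norm_nonneg _
  -- expand the LHS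
  have hLHS : star y ⬝ᵥ (Matrix.of fun i j => (f (x i ⊓ x j) : ℂ)).mulVec y
      = ∑ i, ∑ j, (starRingEnd ℂ) (y i) * ((f (x i ⊓ x j) : ℂ) * y j) := by
    simp [dotProduct, Matrix.mulVec, Finset.mul_sum]
  set L : ℂ := ∑ i, ∑ j, (starRingEnd ℂ) (y i) * ((f (x i ⊓ x j) : ℂ) * y j) with hL
  -- the LHS is self-conjugate, hence real
  have hconj : (starRingEnd ℂ) L = L := by
    rw [hL, map_sum, Finset.sum_comm]
    refine Finset.sum_congr rfl fun i _ => ?_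
    rw [map_sum]
    refine Finset.sum_congr rfl fun j _ => ?_
    simp only [_root_.map_mul, Complex.conj_conj, Complex.conj_ofReal]
    rw [inf_comm (x j) (x i)]
    ring
  have hLim : L.im = 0 := Complex.conj_eq_iff_im.mp hconj
  -- the RHS is a real number
  have hRHS : ((k.1 + 1 : ℂ) * (star y ⬝ᵥ y) * (M : ℂ))
      = ((((k.1 : ℝ) + 1) * (∑ i, u i ^ 2) * M : ℝ) : ℂ) := by
    have : (star y ⬝ᵥ y) = ((∑ i, u i ^ 2 : ℝ) : ℂ) := by
      simp [dotProduct, hu, Complex.conj_mul', Complex.normSq_eq_norm_sq,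
        Complex.ofReal_sum]
    rw [this]
    push_cast
    ring
  -- bound on the real part of each term
  have hterm : ∀ i j : Fin n,
      ((starRingEnd ℂ) (y i) * ((f (x i ⊓ x j) : ℂ) * y j)).re ≤ M * (u i * u j) := by
    intro i j
    by_cases hik : i ≤ k
    · have h1 : (starRingEnd ℂ) (y i) * ((f (x i ⊓ x j) : ℂ) * y j)
          = (f (x i ⊓ x j) : ℂ) * ((starRingEnd ℂ) (y i) * y j) := by ring
      rw [h1, Complex.re_ofReal_mul]
      have hre : ((starRingEnd ℂ) (y i) * y j).re ≤ u i * u j := by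
        calc ((starRingEnd ℂ) (y i) * y j).re
            ≤ ‖(starRingEnd ℂ) (y i) * y j‖ := Complex.re_le_norm _
          _ = u i * u j := by simp [hu, _root_.map_mul]
      calc f (x i ⊓ x j) * ((starRingEnd ℂ) (y i) * y j).re
          ≤ f (x i ⊓ x j) * (u i * u j) :=
            mul_le_mul_of_nonneg_left hre (hf_nonneg _)
        _ ≤ M * (u i * u j) :=
            mul_le_mul_of_nonneg_right (hentry i j hik)
              (mul_nonneg (hu0 i) (hu0 j))
    · have hyi : y i = 0 := hy i (lt_of_not_ge hik)
      have hui : u i = 0 := by simp [hu, hyi]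
      simp [hyi, hui]
  -- real part bound
  have hRe : L.re ≤ ((k.1 : ℝ) + 1) * (∑ i, u i ^ 2) * M := by
    have h1 : L.re = ∑ i, ∑ j,
        ((starRingEnd ℂ) (y i) * ((f (x i ⊓ x j) : ℂ) * y j)).re := by
      rw [hL, Complex.re_sum]
      exact Finset.sum_congr rfl fun i _ => Complex.re_sum _ _
    have h2 : L.re ≤ ∑ i, ∑ j, M * (u i * u j) := by
      rw [h1]
      exact Finset.sum_le_sum fun i _ => Finset.sum_le_sum fun j _ => hterm i j
    have h3 : ∑ i, ∑ j, M * (u i * u j) = M * ((∑ i, u i) * (∑ i, u i)) := by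
      rw [Finset.sum_mul_sum, Finset.mul_sum]
      exact Finset.sum_congr rfl fun i _ => by rw [Finset.mul_sum]
    -- Cauchy–Schwarz on the support
    have hsupp : ∀ g : Fin n → ℝ, (∀ i, u i = 0 → g i = 0) →
        ∑ i, g i = ∑ i ∈ Finset.Iic k, g i := by
      intro g hg
      refine (Finset.sum_subset (Finset.subset_univ _) fun i _ hi => ?_).symm
      have : k < i := lt_of_not_ge (by simpa using hi)
      exact hg i (by simp [hu, hy i this])
    have hCS : (∑ i, u i) ^ 2 ≤ ((k.1 : ℝ) + 1) * ∑ i, u i ^ 2 := by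
      rw [hsupp u (fun i h => h), hsupp (fun i => u i ^ 2) (fun i h => by simp [h])]
      have := sq_sum_le_card_mul_sum_sq (s := Finset.Iic k) (f := u)
      have hcard : ((Finset.Iic k).card : ℝ) = (k.1 : ℝ) + 1 := by
        rw [Fin.card_Iic]; push_cast; ring
      calc (∑ i ∈ Finset.Iic k, u i) ^ 2
          ≤ ((Finset.Iic k).card : ℝ) * ∑ i ∈ Finset.Iic k, u i ^ 2 := by
            exact_mod_cast this
        _ = ((k.1 : ℝ) + 1) * ∑ i ∈ Finset.Iic k, u i ^ 2 := by rw [hcard]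
    calc L.re ≤ M * ((∑ i, u i) * (∑ i, u i)) := by rw [← h3]; exact h2
      _ = M * (∑ i, u i) ^ 2 := by ring
      _ ≤ M * (((k.1 : ℝ) + 1) * ∑ i, u i ^ 2) := mul_le_mul_of_nonneg_left hCS hM0
      _ = ((k.1 : ℝ) + 1) * (∑ i, u i ^ 2) * M := by ring
  rw [hLHS, hRHS, Complex.le_def]
  constructor
  · rw [Complex.ofReal_re]; exact hRe
  · rw [Complex.ofReal_im]; exact hLim
end

section
/- Let P be a lattice, f : P → ℝ nonnegative and order-preserving on the meet-closure of S = {x_1,...,x_n}, with f(x_1) ≤ ⋯ ≤ f(x_n). If λ_1 ≤ λ_2 ≤ ⋯ ≤ λ_n are the eigenvalues of the meet matrix (f(x_i ∧ x_j))_{i,j=1}^n, then λ_k ≤ k f(x_k) for all k = 1,...,n, and moreover f(x_n) ≤ λ_n. -/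
open scoped RealInnerProductSpace InnerProductSpace


open Polynomial Matrix in
lemma charpoly_conj_unitary {n : ℕ} (U D : Matrix (Fin n) (Fin n) ℝ)
    (hU1 : U * star U = 1) :
    (U * D * star U).charpoly = D.charpoly := by
  have hmap : charmatrix (U * D * star U) =
      (C : ℝ →+* ℝ[X]).mapMatrix U * charmatrix D * (C : ℝ →+* ℝ[X]).mapMatrix (star U) := by
    rw [charmatrix, charmatrix, mul_sub, sub_mul]
    congr 1
    · rw [scalar_apply, ← smul_one_eq_diagonal, Matrix.mul_smul, Matrix.smul_mul, mul_one, ← _root_.map_mul, hU1, _root_.map_one]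
    · rw [← _root_.map_mul, ← _root_.map_mul]
  rw [Matrix.charpoly, Matrix.charpoly, hmap, det_mul, det_mul]
  have h1 : det ((C : ℝ →+* ℝ[X]).mapMatrix U) * det ((C : ℝ →+* ℝ[X]).mapMatrix (star U)) = 1 := by
    rw [← det_mul, ← _root_.map_mul, hU1, _root_.map_one, det_one]
  calc (C.mapMatrix U).det * D.charmatrix.det * (C.mapMatrix (star U)).det
      = D.charmatrix.det * ((C.mapMatrix U).det * (C.mapMatrix (star U)).det) := by ring
    _ = D.charmatrix.det := by rw [h1, mul_one]

open Polynomial Matrix in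
lemma charpoly_isHermitian {n : ℕ} (A : Matrix (Fin n) (Fin n) ℝ) (hA : A.IsHermitian) :
    A.charpoly = ∏ i, (X - C (hA.eigenvalues i)) := by
  have hD : (Matrix.diagonal (RCLike.ofReal ∘ hA.eigenvalues) : Matrix (Fin n) (Fin n) ℝ).charpoly
      = ∏ i, (X - C (hA.eigenvalues i)) := by
    rw [Matrix.charpoly_of_upperTriangular _ (Matrix.blockTriangular_diagonal _)]
    simp [charmatrix_apply]
  rw [← hD]
  conv_lhs => rw [hA.spectral_theorem]
  exact charpoly_conj_unitary _ _ ((Matrix.mem_unitaryGroup_iff).mp hA.eigenvectorUnitary.2)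

open Matrix Module in
lemma aux_inter {n : ℕ} (V W : Submodule ℝ (EuclideanSpace ℝ (Fin n)))
    (h : n < finrank ℝ V + finrank ℝ W) :
    ∃ v : EuclideanSpace ℝ (Fin n), v ∈ V ∧ v ∈ W ∧ v ≠ 0 := by
  have h1 := Submodule.finrank_sup_add_finrank_inf_eq V W
  have h2 : finrank ℝ ↥(V ⊔ W) ≤ n := by
    have := Submodule.finrank_le (V ⊔ W)
    simpa [finrank_euclideanSpace, Fintype.card_fin] using this
  have h3 : 0 < finrank ℝ ↥(V ⊓ W) := by omega
  obtain ⟨⟨v, hv⟩, hv0⟩ := Module.finrank_pos_iff_exists_ne_zero.mp h3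
  exact ⟨v, hv.1, hv.2, fun h0 => hv0 (by simp only [Submodule.mk_eq_zero]; exact h0)⟩

open Matrix Module in
lemma aux_rayleigh {n : ℕ} (A : Matrix (Fin n) (Fin n) ℝ) (hA : A.IsHermitian)
    (v : EuclideanSpace ℝ (Fin n)) :
    ⟪v, Matrix.toEuclideanLin A v⟫ = ∑ i, hA.eigenvalues i * (hA.eigenvectorBasis.repr v i)^2 := by
  set b := hA.eigenvectorBasis with hb
  have hT : ∀ j, Matrix.toEuclideanLin A (b j) = hA.eigenvalues j • b j := by
    intro j
    apply (WithLp.equiv 2 (Fin n → ℝ)).injective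
    simp only [WithLp.equiv_apply, Matrix.ofLp_toEuclideanLin_apply]
    have := hA.mulVec_eigenvectorBasis j
    simpa using this
  have hTv : Matrix.toEuclideanLin A v = ∑ i, (hA.eigenvalues i * b.repr v i) • b i := by
    conv_lhs => rw [← b.sum_repr v]
    rw [map_sum]
    congr 1; ext j
    rw [_root_.map_smul, hT, smul_smul, mul_comm]
  rw [hTv, inner_sum]
  congr 1; ext i
  rw [real_inner_smul_right, real_inner_comm, ← b.repr_apply_apply]
  ring

open Matrix Module in
lemma aux_norm {n : ℕ} (A : Matrix (Fin n) (Fin n) ℝ) (hA : A.IsHermitian)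
    (v : EuclideanSpace ℝ (Fin n)) :
    ⟪v, v⟫ = ∑ i, (hA.eigenvectorBasis.repr v i)^2 := by
  set b := hA.eigenvectorBasis with hb
  nth_rewrite 2 [← b.sum_repr v]
  rw [inner_sum]
  congr 1; ext i
  rw [real_inner_smul_right, real_inner_comm, ← b.repr_apply_apply]
  ring

open Matrix Module in
lemma aux_count {n k : ℕ} (hk : k < n) (A : Matrix (Fin n) (Fin n) ℝ)
    (hA : A.IsHermitian) (B : ℝ)
    (hbound : ∀ v : EuclideanSpace ℝ (Fin n), (∀ i : Fin n, k < i.1 → v i = 0) →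
      ⟪v, Matrix.toEuclideanLin A v⟫ ≤ B * ⟪v, v⟫) :
    k + 1 ≤ (Finset.univ.filter (fun i => hA.eigenvalues i ≤ B)).card := by
  by_contra hcon
  push_neg at hcon
  classical
  set bad : Finset (Fin n) := Finset.univ.filter (fun i => ¬ hA.eigenvalues i ≤ B) with hbad
  have hsplit := Finset.card_filter_add_card_filter_not
    (s := (Finset.univ : Finset (Fin n))) (p := fun i => hA.eigenvalues i ≤ B)
  rw [Finset.card_univ, Fintype.card_fin] at hsplit
  have hbadeq : (Finset.univ.filter (fun a => ¬ hA.eigenvalues a ≤ B)).card = bad.card := rfl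
  have hbadcard : n - k ≤ bad.card := by omega
  set b := hA.eigenvectorBasis with hb
  set e := EuclideanSpace.basisFun (Fin n) ℝ with he
  set fam1 : Fin (k+1) → EuclideanSpace ℝ (Fin n) := e ∘ Fin.castLE hk with hfam1
  set fam2 : {i // i ∈ bad} → EuclideanSpace ℝ (Fin n) := b ∘ Subtype.val with hfam2
  set V := Submodule.span ℝ (Set.range fam1) with hV
  set W := Submodule.span ℝ (Set.range fam2) with hW
  have hVrank : finrank ℝ V = k + 1 := by
    rw [finrank_span_eq_card ((e.orthonormal.comp _ (Fin.castLE_injective hk)).linearIndependent)]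
    simp
  have hWrank : finrank ℝ W = bad.card := by
    rw [finrank_span_eq_card ((b.orthonormal.comp _ Subtype.val_injective).linearIndependent)]
    simp [Fintype.card_coe]
  have hVgen : ∀ u, u ∈ V → ∀ i : Fin n, k < i.1 → u i = 0 := by
    intro u hu
    induction hu using Submodule.span_induction with
    | mem w hw =>
      intro i hi
      obtain ⟨j, rfl⟩ := hw
      simp only [hfam1, Function.comp_apply, he, EuclideanSpace.basisFun_apply]
      rw [EuclideanSpace.single_apply, if_neg]
      intro hji
      have : (j : ℕ) = (i : ℕ) := by rw [hji]; rfl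
      omega
    | zero => intro i _; rfl
    | add w₁ w₂ h₁ h₂ ih₁ ih₂ => intro i hi; simp [ih₁ i hi, ih₂ i hi]
    | smul a w hw ih => intro i hi; simp [ih i hi]
  have hWgen : ∀ u, u ∈ W → ∀ i : Fin n, i ∉ bad → ⟪b i, u⟫ = 0 := by
    intro u hu
    induction hu using Submodule.span_induction with
    | mem w hw =>
      intro i hi
      obtain ⟨j, rfl⟩ := hw
      exact b.orthonormal.2 (fun hij => hi (hij ▸ j.2))
    | zero => intro i _; exact inner_zero_right _
    | add w₁ w₂ h₁ h₂ ih₁ ih₂ =>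
      intro i hi
      rw [inner_add_right, ih₁ i hi, ih₂ i hi, add_zero]
    | smul a w hw ih =>
      intro i hi
      rw [real_inner_smul_right, ih i hi, mul_zero]
  obtain ⟨v, hvV, hvW, hv0⟩ := aux_inter V W (by omega)
  have hVprop : ∀ i : Fin n, k < i.1 → v i = 0 := hVgen v hvV
  have hWprop : ∀ i : Fin n, i ∉ bad → b.repr v i = 0 := by
    intro i hi
    rw [b.repr_apply_apply]
    exact hWgen v hvW i hi
  have h1 : ⟪v, Matrix.toEuclideanLin A v⟫ ≤ B * ⟪v, v⟫ := hbound v hVprop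
  have h2 : B * ⟪v, v⟫ < ⟪v, Matrix.toEuclideanLin A v⟫ := by
    rw [aux_rayleigh A hA v, aux_norm A hA v, Finset.mul_sum]
    apply Finset.sum_lt_sum
    · intro i _
      by_cases hib : i ∈ bad
      · have : B < hA.eigenvalues i := by
          simp only [hbad, Finset.mem_filter] at hib
          exact lt_of_not_ge hib.2
        nlinarith [sq_nonneg (b.repr v i)]
      · rw [hWprop i hib]; simp
    · have hex : ∃ i, b.repr v i ≠ 0 := by
        by_contra hall
        push_neg at hall
        apply hv0
        apply b.repr.injective
        rw [map_zero]
        ext i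
        simp [hall i]
      obtain ⟨i, hi⟩ := hex
      have hib : i ∈ bad := by
        by_contra hnb
        exact hi (hWprop i hnb)
      refine ⟨i, Finset.mem_univ i, ?_⟩
      have : B < hA.eigenvalues i := by
        simp only [hbad, Finset.mem_filter] at hib
        exact lt_of_not_ge hib.2
      have hsq : 0 < (b.repr v i)^2 := by positivity
      nlinarith
  linarith

open Matrix Module in
lemma aux_top {n : ℕ} (A : Matrix (Fin n) (Fin n) ℝ) (hA : A.IsHermitian) (B : ℝ)
    (v : EuclideanSpace ℝ (Fin n)) (hv0 : v ≠ 0)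
    (hB : B * ⟪v, v⟫ ≤ ⟪v, Matrix.toEuclideanLin A v⟫) :
    ∃ i, B ≤ hA.eigenvalues i := by
  by_contra hall
  push_neg at hall
  set b := hA.eigenvectorBasis with hb
  have hex : ∃ i, b.repr v i ≠ 0 := by
    by_contra hallz
    push_neg at hallz
    apply hv0
    apply b.repr.injective
    rw [map_zero]
    ext i
    simp [hallz i]
  obtain ⟨i0, hi0⟩ := hex
  have hlt : ⟪v, Matrix.toEuclideanLin A v⟫ < B * ⟪v, v⟫ := by
    rw [aux_rayleigh A hA v, aux_norm A hA v, Finset.mul_sum]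
    apply Finset.sum_lt_sum
    · intro i _
      nlinarith [sq_nonneg (b.repr v i), (hall i).le]
    · refine ⟨i0, Finset.mem_univ i0, ?_⟩
      have hsq : 0 < (b.repr v i0)^2 := by positivity
      nlinarith [hall i0]
  linarith

lemma subset_meetClosure {P : Type*} [Lattice P] (S : Set P) : S ⊆ meetClosure S := by
  intro a ha T hT
  exact hT.1 ha

lemma meetClosure_inf {P : Type*} [Lattice P] (S : Set P) {a b : P}
    (ha : a ∈ meetClosure S) (hb : b ∈ meetClosure S) : a ⊓ b ∈ meetClosure S := by
  intro T hT
  exact hT.2 a (ha T hT) b (hb T hT)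

open Polynomial in
lemma aux_multiset {n : ℕ} (lam mu : Fin n → ℝ)
    (h : ∏ i, (X - C (lam i)) = ∏ i, (X - C (mu i))) :
    Multiset.map lam Finset.univ.val = Multiset.map mu Finset.univ.val := by
  have h1 : ((Multiset.map lam Finset.univ.val).map (fun a => X - C a)).prod
      = ((Multiset.map mu Finset.univ.val).map (fun a => X - C a)).prod := by
    rw [Multiset.map_map, Multiset.map_map]
    rw [Finset.prod_eq_multiset_prod, Finset.prod_eq_multiset_prod] at h
    exact h
  have h2 := congrArg Polynomial.roots h1
  rwa [roots_multiset_prod_X_sub_C, roots_multiset_prod_X_sub_C] at h2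

-- Rayleigh quotient bound for a matrix with small nonneg entries on a corner
open Matrix in
lemma aux_corner_bound {n k : ℕ} (hk : k < n) (M : Matrix (Fin n) (Fin n) ℝ) (c : ℝ)
    (hM0 : ∀ i j, 0 ≤ M i j) (hMc : ∀ i j : Fin n, i.1 ≤ k → j.1 ≤ k → M i j ≤ c)
    (hc : 0 ≤ c)
    (v : EuclideanSpace ℝ (Fin n)) (hv : ∀ i : Fin n, k < i.1 → v i = 0) :
    ⟪v, Matrix.toEuclideanLin M v⟫ ≤ ((k : ℝ) + 1) * c * ⟪v, v⟫ := by
  classical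
  have hinner : ∀ w : EuclideanSpace ℝ (Fin n), ⟪v, w⟫ = ∑ i, v i * w i := by
    intro w
    simp [PiLp.inner_apply, RCLike.inner_apply, conj_trivial]
    exact Finset.sum_congr rfl fun _ _ => mul_comm _ _
  have happly : ∀ i, (Matrix.toEuclideanLin M v : EuclideanSpace ℝ (Fin n)) i
      = ∑ j, M i j * v j := by
    intro i
    rfl
  set s : Finset (Fin n) := Finset.univ.filter (fun i => i.1 ≤ k) with hs
  have hvz : ∀ i : Fin n, i ∉ s → v i = 0 := by
    intro i hi
    apply hv
    simp only [hs, Finset.mem_filter, Finset.mem_univ, true_and, not_le] at hi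
    exact hi
  have hscard : s.card = k + 1 := by
    have : s = Finset.Iic (⟨k, hk⟩ : Fin n) := by
      ext i
      simp [hs, Fin.le_def]
    rw [this, Fin.card_Iic]
  have step1 : ⟪v, Matrix.toEuclideanLin M v⟫ = ∑ i ∈ s, ∑ j ∈ s, v i * (M i j * v j) := by
    rw [hinner]
    rw [← Finset.sum_subset (Finset.subset_univ s) (fun i _ hi => by rw [hvz i hi, zero_mul])]
    apply Finset.sum_congr rfl
    intro i _
    rw [happly, Finset.mul_sum,
      ← Finset.sum_subset (Finset.subset_univ s)
        (fun j _ hj => by rw [hvz j hj, mul_zero, mul_zero])]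
  have step2 : ∑ i ∈ s, ∑ j ∈ s, v i * (M i j * v j) ≤ c * (∑ i ∈ s, |v i|)^2 := by
    have : (∑ i ∈ s, |v i|)^2 = ∑ i ∈ s, ∑ j ∈ s, |v i| * |v j| := by
      rw [sq, Finset.sum_mul_sum]
    rw [this, Finset.mul_sum]
    apply Finset.sum_le_sum
    intro i hi
    rw [Finset.mul_sum]
    apply Finset.sum_le_sum
    intro j hj
    simp only [hs, Finset.mem_filter] at hi hj
    have h1 : v i * (M i j * v j) ≤ |v i| * (M i j * |v j|) := by
      calc v i * (M i j * v j) ≤ |v i * (M i j * v j)| := le_abs_self _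
        _ = |v i| * (M i j * |v j|) := by
            rw [abs_mul, abs_mul, abs_of_nonneg (hM0 i j)]
    calc v i * (M i j * v j) ≤ |v i| * (M i j * |v j|) := h1
      _ ≤ |v i| * (c * |v j|) := by
          apply mul_le_mul_of_nonneg_left _ (abs_nonneg _)
          exact mul_le_mul_of_nonneg_right (hMc i j hi.2 hj.2) (abs_nonneg _)
      _ = c * (|v i| * |v j|) := by ring
  have step3 : (∑ i ∈ s, |v i|)^2 ≤ ((k : ℝ) + 1) * ∑ i ∈ s, v i ^ 2 := by
    have := sq_sum_le_card_mul_sum_sq (s := s) (f := fun i => |v i|)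
    simp only [sq_abs] at this
    calc (∑ i ∈ s, |v i|)^2 ≤ s.card * ∑ i ∈ s, v i ^ 2 := this
      _ = ((k : ℝ) + 1) * ∑ i ∈ s, v i ^ 2 := by rw [hscard]; push_cast; ring
  have step4 : ∑ i ∈ s, v i ^ 2 ≤ ⟪v, v⟫ := by
    rw [hinner]
    have : ∀ i : Fin n, v i * v i = v i ^ 2 := fun i => (sq (v i)).symm
    simp_rw [this]
    exact Finset.sum_le_sum_of_subset_of_nonneg (Finset.subset_univ s)
      (fun i _ _ => sq_nonneg _)
  calc ⟪v, Matrix.toEuclideanLin M v⟫ = ∑ i ∈ s, ∑ j ∈ s, v i * (M i j * v j) := step1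
    _ ≤ c * (∑ i ∈ s, |v i|)^2 := step2
    _ ≤ c * (((k : ℝ) + 1) * ∑ i ∈ s, v i ^ 2) := by
        exact mul_le_mul_of_nonneg_left step3 hc
    _ ≤ c * (((k : ℝ) + 1) * ⟪v, v⟫) := by
        apply mul_le_mul_of_nonneg_left _ hc
        apply mul_le_mul_of_nonneg_left step4 (by positivity)
    _ = ((k : ℝ) + 1) * c * ⟪v, v⟫ := by ring

/-- **Eigenvalue bounds for meet matrices**: if `f` is nonnegative,
order-preserving on the meet-closure of `S`, increasing along the indexing, and
`λ 0 ≤ λ 1 ≤ ⋯ ≤ λ (n-1)` are the eigenvalues (with multiplicity, i.e. roots of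
the characteristic polynomial) of the meet matrix `(f (x i ⊓ x j))`, then
`λ k ≤ (k+1) * f (x k)` for each (0-indexed) `k`, and `f (x (n-1)) ≤ λ (n-1)`. -/
theorem meet_matrix_eigenvalue_bounds {P : Type*} [Lattice P] {n : ℕ} (hn : 0 < n)
    (x : Fin n → P) (f : P → ℝ)
    (hf_nonneg : ∀ a, 0 ≤ f a)
    (hf_mono : ∀ a ∈ meetClosure (Set.range x), ∀ b ∈ meetClosure (Set.range x),
      a ≤ b → f a ≤ f b)
    (hinc : ∀ i j : Fin n, i ≤ j → f (x i) ≤ f (x j))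
    (lam : Fin n → ℝ) (hlam_mono : Monotone lam)
    (hlam : (Matrix.of fun i j => f (x i ⊓ x j)).charpoly =
      ∏ i, (Polynomial.X - Polynomial.C (lam i))) :
    (∀ k : Fin n, lam k ≤ (k.1 + 1 : ℝ) * f (x k)) ∧
      f (x ⟨n - 1, by omega⟩) ≤ lam ⟨n - 1, by omega⟩ := by
  classical
  set M : Matrix (Fin n) (Fin n) ℝ := Matrix.of fun i j => f (x i ⊓ x j) with hM
  have hsym : M.IsHermitian := by
    ext i j
    simp only [Matrix.conjTranspose_apply, hM, Matrix.of_apply, star_trivial]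
    rw [inf_comm]
  have hmemx : ∀ i, x i ∈ meetClosure (Set.range x) :=
    fun i => subset_meetClosure _ ⟨i, rfl⟩
  have hmeminf : ∀ i j, x i ⊓ x j ∈ meetClosure (Set.range x) :=
    fun i j => meetClosure_inf _ (hmemx i) (hmemx j)
  have hentry_le : ∀ i j : Fin n, f (x i ⊓ x j) ≤ f (x i) := fun i j =>
    hf_mono _ (hmeminf i j) _ (hmemx i) inf_le_left
  have hmul : Multiset.map lam Finset.univ.val
      = Multiset.map hsym.eigenvalues Finset.univ.val := by
    apply aux_multiset
    rw [← hlam, charpoly_isHermitian M hsym]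
  constructor
  · intro k
    set B : ℝ := (k.1 + 1 : ℝ) * f (x k) with hB
    have hray : ∀ v : EuclideanSpace ℝ (Fin n), (∀ i : Fin n, k.1 < i.1 → v i = 0) →
        ⟪v, Matrix.toEuclideanLin M v⟫ ≤ B * ⟪v, v⟫ := by
      intro v hv
      have := aux_corner_bound k.2 M (f (x k)) (fun i j => hf_nonneg _)
        (fun i j hi hj => by
          calc M i j = f (x i ⊓ x j) := rfl
            _ ≤ f (x i) := hentry_le i j
            _ ≤ f (x k) := hinc i k (Fin.le_def.mpr hi))
        (hf_nonneg _) v hv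
      exact this
    have hcount := aux_count k.2 M hsym B hray
    by_contra hcon
    push_neg at hcon
    -- transfer count to lam
    have hcard : (Finset.univ.filter (fun i => lam i ≤ B)).card
        = (Finset.univ.filter (fun i => hsym.eigenvalues i ≤ B)).card := by
      have h1 := congrArg (fun m : Multiset ℝ => Multiset.card
        (m.filter (fun a => a ≤ B))) hmul
      simp only [Multiset.filter_map, Multiset.card_map, Function.comp] at h1
      rw [Finset.card, Finset.card, Finset.filter_val, Finset.filter_val]
      convert h1 using 2
    have hsubset : (Finset.univ.filter (fun i => lam i ≤ B))
        ⊆ Finset.Iio k := by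
      intro i hi
      simp only [Finset.mem_filter] at hi
      rw [Finset.mem_Iio]
      by_contra hik
      push_neg at hik
      exact absurd (le_trans (hlam_mono hik) hi.2) (not_le.mpr hcon)
    have := Finset.card_le_card hsubset
    rw [Fin.card_Iio] at this
    omega
  · set l : Fin n := ⟨n - 1, by omega⟩ with hl
    set v : EuclideanSpace ℝ (Fin n) := EuclideanSpace.single l (1 : ℝ) with hv
    have hv0 : v ≠ 0 := by
      intro h
      have h1 : v l = 0 := by rw [h]; rfl
      rw [hv, EuclideanSpace.single_apply, if_pos rfl] at h1
      exact one_ne_zero h1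
    have hvv : ⟪v, v⟫ = 1 := by
      rw [hv]
      simp [EuclideanSpace.inner_single_left, EuclideanSpace.single_apply]
    have hTv : ⟪v, Matrix.toEuclideanLin M v⟫ = f (x l) := by
      rw [hv, EuclideanSpace.inner_single_left]
      have : (Matrix.toEuclideanLin M (EuclideanSpace.single l (1:ℝ))
          : EuclideanSpace ℝ (Fin n)) l = ∑ j, M l j * (EuclideanSpace.single l (1:ℝ)) j := rfl
      rw [map_one, one_mul, this]
      rw [Finset.sum_eq_single l]
      · simp only [EuclideanSpace.single_apply, eq_self_iff_true, if_true, mul_one]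
        show f (x l ⊓ x l) = f (x l)
        rw [inf_idem]
      · intro j _ hj
        rw [EuclideanSpace.single_apply, if_neg hj, mul_zero]
      · intro h
        exact absurd (Finset.mem_univ l) h
    obtain ⟨i, hi⟩ := aux_top M hsym (f (x l)) v hv0 (by rw [hvv, hTv, mul_one])
    have : hsym.eigenvalues i ∈ Multiset.map lam Finset.univ.val := by
      rw [hmul]
      exact Multiset.mem_map.mpr ⟨i, by simp, rfl⟩
    obtain ⟨j, _, hj⟩ := Multiset.mem_map.mp this
    calc f (x l) ≤ hsym.eigenvalues i := hi
      _ = lam j := hj.symm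
      _ ≤ lam l := by
        apply hlam_mono
        rw [Fin.le_def]
        simp only [hl]
        omega
end
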